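/- The following let-bang rule for machine values is admissible in CAU⁻σ: let(q ▷ ! V, ⌊N̂[1·(e∘↑)]⌋) reduces in zero or more CAU⁻σ steps to t(let(q,r); β!; ⌈⌊N̂[1·(e∘↑)]⌋[V]⌉) ▷ ⌊N̂[V·e]⌋. -/

import Mathlib

namespace CAU

/-! ## CAU⁻ syntax (de Bruijn, pure: no explicit operators) -/

/-- Trails of CAU⁻. -/
inductive NTr : Type
  | r : NTr
  | t : NTr → NTr → NTr
  | pb : NTr                      -- β
  | pbb : NTr                     -- β!
  | ti : NTr
  | lam : NTr → NTr
  | ap : NTr → NTr → NTr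
  | lets : NTr → NTr → NTr
  | tb : (Fin 9 → NTr) → NTr
  deriving Inhabited

/-- Terms of CAU⁻ (de Bruijn indices). -/
inductive NTm : Type
  | var : ℕ → NTm
  | lam : NTm → NTm
  | ap : NTm → NTm → NTm
  | lets : NTm → NTm → NTm
  | bang : NTr → NTm → NTm
  | ann : NTr → NTm → NTm         -- q ▷ M
  | insp : (Fin 9 → NTm) → NTm    -- ι(ϑ)
  deriving Inhabited

/-- Permutation (τ) reduction on CAU⁻ trails, closed under arbitrary contexts. -/
inductive TStepQ : NTr → NTr → Prop
  | tReflR (q) : TStepQ (.t q .r) q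
  | tReflL (q) : TStepQ (.t .r q) q
  | tbRefl : TStepQ (.tb fun _ => .r) .r
  | apRefl : TStepQ (.ap .r .r) .r
  | lamRefl : TStepQ (.lam .r) .r
  | letsRefl : TStepQ (.lets .r .r) .r
  | tAssoc (q₁ q₂ q₃) : TStepQ (.t (.t q₁ q₂) q₃) (.t q₁ (.t q₂ q₃))
  | tLam (q q') : TStepQ (.t (.lam q) (.lam q')) (.lam (.t q q'))
  | tLamT (q₁ q₁' q) :
      TStepQ (.t (.lam q₁) (.t (.lam q₁') q)) (.t (.lam (.t q₁ q₁')) q)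
  | tAp (q₁ q₂ q₁' q₂') :
      TStepQ (.t (.ap q₁ q₂) (.ap q₁' q₂')) (.ap (.t q₁ q₁') (.t q₂ q₂'))
  | tApT (q₁ q₂ q₁' q₂' q) :
      TStepQ (.t (.ap q₁ q₂) (.t (.ap q₁' q₂') q)) (.t (.ap (.t q₁ q₁') (.t q₂ q₂')) q)
  | tLets (q₁ q₂ q₁' q₂') :
      TStepQ (.t (.lets q₁ q₂) (.lets q₁' q₂')) (.lets (.t q₁ q₁') (.t q₂ q₂'))
  | tLetsT (q₁ q₂ q₁' q₂' q) :
      TStepQ (.t (.lets q₁ q₂) (.t (.lets q₁' q₂') q)) (.t (.lets (.t q₁ q₁') (.t q₂ q₂')) q)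
  | tTb (ζ₁ ζ₂) : TStepQ (.t (.tb ζ₁) (.tb ζ₂)) (.tb fun i => .t (ζ₁ i) (ζ₂ i))
  | tTbT (ζ₁ ζ₂ q) :
      TStepQ (.t (.tb ζ₁) (.t (.tb ζ₂) q)) (.t (.tb fun i => .t (ζ₁ i) (ζ₂ i)) q)
  | tL {q q''} (q') : TStepQ q q'' → TStepQ (.t q q') (.t q'' q')
  | tR {q' q''} (q) : TStepQ q' q'' → TStepQ (.t q q') (.t q q'')
  | lamC {q q'} : TStepQ q q' → TStepQ (.lam q) (.lam q')
  | apL {q q''} (q') : TStepQ q q'' → TStepQ (.ap q q') (.ap q'' q')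
  | apR {q' q''} (q) : TStepQ q' q'' → TStepQ (.ap q q') (.ap q q'')
  | letsL {q q''} (q') : TStepQ q q'' → TStepQ (.lets q q') (.lets q'' q')
  | letsR {q' q''} (q) : TStepQ q' q'' → TStepQ (.lets q q') (.lets q q'')
  | tbC {ζ} (i : Fin 9) {q'} : TStepQ (ζ i) q' →
      TStepQ (.tb ζ) (.tb (Function.update ζ i q'))

/-- Permutation (τ) reduction on CAU⁻ terms, closed under arbitrary contexts. -/
inductive TStepN : NTm → NTm → Prop
  | annRefl (M) : TStepN (.ann .r M) M
  | annAnn (q q' M) : TStepN (.ann q (.ann q' M)) (.ann (.t q q') M)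
  | bangAnn (q q' M) : TStepN (.bang q (.ann q' M)) (.bang (.t q q') M)
  | lamAnn (q M) : TStepN (.lam (.ann q M)) (.ann (.lam q) (.lam M))
  | apAnnL (q M N) : TStepN (.ap (.ann q M) N) (.ann (.ap q .r) (.ap M N))
  | apAnnR (q M N) : TStepN (.ap M (.ann q N)) (.ann (.ap .r q) (.ap M N))
  | letsAnnL (q M N) : TStepN (.lets (.ann q M) N) (.ann (.lets q .r) (.lets M N))
  | letsAnnR (q M N) : TStepN (.lets M (.ann q N)) (.ann (.lets .r q) (.lets M N))
  | inspAnn (ϑ : Fin 9 → NTm) (i : Fin 9) (q M) : ϑ i = .ann q M →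
      TStepN (.insp ϑ)
        (.ann (.tb (Function.update (fun _ => NTr.r) i q)) (.insp (Function.update ϑ i M)))
  | lamC {M M'} : TStepN M M' → TStepN (.lam M) (.lam M')
  | apL {M M'} (N) : TStepN M M' → TStepN (.ap M N) (.ap M' N)
  | apR {N N'} (M) : TStepN N N' → TStepN (.ap M N) (.ap M N')
  | letsL {M M'} (N) : TStepN M M' → TStepN (.lets M N) (.lets M' N)
  | letsR {N N'} (M) : TStepN N N' → TStepN (.lets M N) (.lets M N')
  | bangQ {q q'} (M) : TStepQ q q' → TStepN (.bang q M) (.bang q' M)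
  | bangM {M M'} (q) : TStepN M M' → TStepN (.bang q M) (.bang q M')
  | annQ {q q'} (M) : TStepQ q q' → TStepN (.ann q M) (.ann q' M)
  | annM {M M'} (q) : TStepN M M' → TStepN (.ann q M) (.ann q M')
  | inspC {ϑ} (i : Fin 9) {M'} : TStepN (ϑ i) M' →
      TStepN (.insp ϑ) (.insp (Function.update ϑ i M'))

end CAU

/-! ## CAU⁻σ syntax: explicit substitutions and explicit trail projections -/

namespace CAU

mutual
  /-- Terms of CAU⁻σ. -/
  inductive Tm : Type
    | one : Tm                               -- de Bruijn index 1
    | lam : Tm → Tm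
    | ap : Tm → Tm → Tm
    | lets : Tm → Tm → Tm
    | bang : Tr → Tm → Tm
    | ann : Tr → Tm → Tm                     -- q ▷ M
    | insp : (Fin 9 → Tm) → Tm               -- ι(ϑ)
    | sub : Tm → Sb → Tm                     -- closure M[s]
    | er : Tm → Tm                           -- explicit trail erasure ⌊M⌋
  /-- Trails of CAU⁻σ. -/
  inductive Tr : Type
    | r : Tr
    | t : Tr → Tr → Tr
    | pb : Tr                                -- β
    | pbb : Tr                               -- β!
    | ti : Tr
    | lam : Tr → Tr
    | ap : Tr → Tr → Tr
    | lets : Tr → Tr → Tr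
    | tb : (Fin 9 → Tr) → Tr
    | ext : Tm → Tr                          -- explicit trail extraction ⌈M⌉
  /-- Explicit substitutions of CAU⁻σ. -/
  inductive Sb : Type
    | id : Sb                                -- ⟨⟩
    | sh : Sb                                -- ↑
    | cons : Tm → Sb → Sb                    -- M · s
    | comp : Sb → Sb → Sb                    -- s ∘ t
end

instance : Inhabited Tm := ⟨Tm.one⟩
instance : Inhabited Tr := ⟨Tr.r⟩
instance : Inhabited Sb := ⟨Sb.id⟩

/-- `pow n` is the iterated lift `↑^(n+1)`. -/
def pow : ℕ → Sb
  | 0 => .sh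
  | n + 1 => .comp .sh (pow n)

mutual
  /-- σ∪τ one-step reduction on CAU⁻σ terms (closed under arbitrary contexts). -/
  inductive StepT : Tm → Tm → Prop
    -- σ-rules for explicit substitutions
    | subOneId : StepT (.sub .one .id) .one
    | subOneCons (M s) : StepT (.sub .one (.cons M s)) M
    | subLam (M s) : StepT (.sub (.lam M) s) (.lam (.sub M (.cons .one (.comp s .sh))))
    | subAp (M N s) : StepT (.sub (.ap M N) s) (.ap (.sub M s) (.sub N s))
    | subBang (q M s) : StepT (.sub (.bang q M) s) (.bang q (.sub M s))
    | subLets (M N s) :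
        StepT (.sub (.lets M N) s) (.lets (.sub M s) (.sub N (.cons .one (.comp s .sh))))
    | subAnn (q M s) : StepT (.sub (.ann q M) s) (.ann q (.sub M s))
    | subInsp (ϑ s) : StepT (.sub (.insp ϑ) s) (.insp fun i => .sub (ϑ i) s)
    | subSub (M s t) : StepT (.sub (.sub M s) t) (.sub M (.comp s t))
    -- σ-rules for explicit trail erasure
    | erOne : StepT (.er .one) .one
    | erOneSh (n) : StepT (.er (.sub .one (pow n))) (.sub .one (pow n))
    | erLam (M) : StepT (.er (.lam M)) (.lam (.er M))
    | erAp (M N) : StepT (.er (.ap M N)) (.ap (.er M) (.er N))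
    | erBang (q M) : StepT (.er (.bang q M)) (.bang q M)
    | erLets (M N) : StepT (.er (.lets M N)) (.lets (.er M) (.er N))
    | erAnn (q M) : StepT (.er (.ann q M)) (.er M)
    | erInsp (ϑ) : StepT (.er (.insp ϑ)) (.insp fun i => .er (ϑ i))
    -- τ-rules on terms
    | annRefl (M) : StepT (.ann .r M) M
    | annAnn (q q' M) : StepT (.ann q (.ann q' M)) (.ann (.t q q') M)
    | bangAnn (q q' M) : StepT (.bang q (.ann q' M)) (.bang (.t q q') M)
    | lamAnn (q M) : StepT (.lam (.ann q M)) (.ann (.lam q) (.lam M))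
    | apAnnL (q M N) : StepT (.ap (.ann q M) N) (.ann (.ap q .r) (.ap M N))
    | apAnnR (q M N) : StepT (.ap M (.ann q N)) (.ann (.ap .r q) (.ap M N))
    | letsAnnL (q M N) : StepT (.lets (.ann q M) N) (.ann (.lets q .r) (.lets M N))
    | letsAnnR (q M N) : StepT (.lets M (.ann q N)) (.ann (.lets .r q) (.lets M N))
    | inspAnn (ϑ : Fin 9 → Tm) (i : Fin 9) (q M) : ϑ i = .ann q M →
        StepT (.insp ϑ)
          (.ann (.tb (Function.update (fun _ => Tr.r) i q)) (.insp (Function.update ϑ i M)))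
    -- congruence closure
    | lamC {M M'} : StepT M M' → StepT (.lam M) (.lam M')
    | apL {M M'} (N) : StepT M M' → StepT (.ap M N) (.ap M' N)
    | apR {N N'} (M) : StepT N N' → StepT (.ap M N) (.ap M N')
    | letsL {M M'} (N) : StepT M M' → StepT (.lets M N) (.lets M' N)
    | letsR {N N'} (M) : StepT N N' → StepT (.lets M N) (.lets M N')
    | bangQ {q q'} (M) : StepQ q q' → StepT (.bang q M) (.bang q' M)
    | bangM {M M'} (q) : StepT M M' → StepT (.bang q M) (.bang q M')
    | annQ {q q'} (M) : StepQ q q' → StepT (.ann q M) (.ann q' M)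
    | annM {M M'} (q) : StepT M M' → StepT (.ann q M) (.ann q M')
    | inspC {ϑ} (i : Fin 9) {M'} : StepT (ϑ i) M' →
        StepT (.insp ϑ) (.insp (Function.update ϑ i M'))
    | subM {M M'} (s) : StepT M M' → StepT (.sub M s) (.sub M' s)
    | subS {s s'} (M) : StepS s s' → StepT (.sub M s) (.sub M s')
    | erC {M M'} : StepT M M' → StepT (.er M) (.er M')
  /-- σ∪τ one-step reduction on CAU⁻σ trails. -/
  inductive StepQ : Tr → Tr → Prop
    -- σ-rules for explicit trail extraction
    | extOne : StepQ (.ext .one) .r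
    | extOneSh (n) : StepQ (.ext (.sub .one (pow n))) .r
    | extLam (M) : StepQ (.ext (.lam M)) (.lam (.ext M))
    | extAp (M N) : StepQ (.ext (.ap M N)) (.ap (.ext M) (.ext N))
    | extBang (q M) : StepQ (.ext (.bang q M)) .r
    | extLets (M N) : StepQ (.ext (.lets M N)) (.lets (.ext M) (.ext N))
    | extAnn (q M) : StepQ (.ext (.ann q M)) (.t q (.ext M))
    | extInsp (ϑ) : StepQ (.ext (.insp ϑ)) (.tb fun i => .ext (ϑ i))
    -- τ-rules on trails
    | tReflR (q) : StepQ (.t q .r) q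
    | tReflL (q) : StepQ (.t .r q) q
    | tbRefl : StepQ (.tb fun _ => .r) .r
    | apRefl : StepQ (.ap .r .r) .r
    | lamRefl : StepQ (.lam .r) .r
    | letsRefl : StepQ (.lets .r .r) .r
    | tAssoc (q₁ q₂ q₃) : StepQ (.t (.t q₁ q₂) q₃) (.t q₁ (.t q₂ q₃))
    | tLam (q q') : StepQ (.t (.lam q) (.lam q')) (.lam (.t q q'))
    | tLamT (q₁ q₁' q) :
        StepQ (.t (.lam q₁) (.t (.lam q₁') q)) (.t (.lam (.t q₁ q₁')) q)
    | tAp (q₁ q₂ q₁' q₂') :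
        StepQ (.t (.ap q₁ q₂) (.ap q₁' q₂')) (.ap (.t q₁ q₁') (.t q₂ q₂'))
    | tApT (q₁ q₂ q₁' q₂' q) :
        StepQ (.t (.ap q₁ q₂) (.t (.ap q₁' q₂') q)) (.t (.ap (.t q₁ q₁') (.t q₂ q₂')) q)
    | tLets (q₁ q₂ q₁' q₂') :
        StepQ (.t (.lets q₁ q₂) (.lets q₁' q₂')) (.lets (.t q₁ q₁') (.t q₂ q₂'))
    | tLetsT (q₁ q₂ q₁' q₂' q) :
        StepQ (.t (.lets q₁ q₂) (.t (.lets q₁' q₂') q)) (.t (.lets (.t q₁ q₁') (.t q₂ q₂')) q)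
    | tTb (ζ₁ ζ₂) : StepQ (.t (.tb ζ₁) (.tb ζ₂)) (.tb fun i => .t (ζ₁ i) (ζ₂ i))
    | tTbT (ζ₁ ζ₂ q) :
        StepQ (.t (.tb ζ₁) (.t (.tb ζ₂) q)) (.t (.tb fun i => .t (ζ₁ i) (ζ₂ i)) q)
    -- congruence closure
    | tL {q q''} (q') : StepQ q q'' → StepQ (.t q q') (.t q'' q')
    | tR {q' q''} (q) : StepQ q' q'' → StepQ (.t q q') (.t q q'')
    | lamC {q q'} : StepQ q q' → StepQ (.lam q) (.lam q')
    | apL {q q''} (q') : StepQ q q'' → StepQ (.ap q q') (.ap q'' q')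
    | apR {q' q''} (q) : StepQ q' q'' → StepQ (.ap q q') (.ap q q'')
    | letsL {q q''} (q') : StepQ q q'' → StepQ (.lets q q') (.lets q'' q')
    | letsR {q' q''} (q) : StepQ q' q'' → StepQ (.lets q q') (.lets q q'')
    | tbC {ζ} (i : Fin 9) {q'} : StepQ (ζ i) q' → StepQ (.tb ζ) (.tb (Function.update ζ i q'))
    | extC {M M'} : StepT M M' → StepQ (.ext M) (.ext M')
  /-- σ one-step reduction on CAU⁻σ substitutions. -/
  inductive StepS : Sb → Sb → Prop
    | idComp (s) : StepS (.comp .id s) s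
    | shId : StepS (.comp .sh .id) .sh
    | shCons (M s) : StepS (.comp .sh (.cons M s)) s
    | consComp (M s t) : StepS (.comp (.cons M s) t) (.cons (.sub M t) (.comp s t))
    | compAssoc (s₁ s₂ s₃) : StepS (.comp (.comp s₁ s₂) s₃) (.comp s₁ (.comp s₂ s₃))
    | consM {M M'} (s) : StepT M M' → StepS (.cons M s) (.cons M' s)
    | consS {s s'} (M) : StepS s s' → StepS (.cons M s) (.cons M s')
    | compL {s s''} (t) : StepS s s'' → StepS (.comp s t) (.comp s'' t)
    | compR {t t'} (s) : StepS t t' → StepS (.comp s t) (.comp s t')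
end

/-- στ-normal terms. -/
def NormalT (M : Tm) : Prop := ∀ N, ¬ StepT M N
/-- στ-normal trails. -/
def NormalQ (q : Tr) : Prop := ∀ q', ¬ StepQ q q'
/-- σ-normal substitutions. -/
def NormalS (s : Sb) : Prop := ∀ t, ¬ StepS s t

/-- `nf` is a στ-normal-form function for terms. -/
def IsNFT (nf : Tm → Tm) : Prop :=
  ∀ M, Relation.ReflTransGen StepT M (nf M) ∧ NormalT (nf M)
/-- `nfq` is a στ-normal-form function for trails. -/
def IsNFQ (nfq : Tr → Tr) : Prop :=
  ∀ q, Relation.ReflTransGen StepQ q (nfq q) ∧ NormalQ (nfq q)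
/-- `nfs` is a σ-normal-form function for substitutions. -/
def IsNFS (nfs : Sb → Sb) : Prop :=
  ∀ s, Relation.ReflTransGen StepS s (nfs s) ∧ NormalS (nfs s)

end CAU
namespace CAU

/-! ## Grammar of στ-normal forms -/

mutual
  /-- Grammar of στ-normal CAU⁻σ terms. -/
  inductive GTm : Tm → Prop
    | one : GTm .one
    | oneSh (n) : GTm (.sub .one (pow n))
    | lam {M} : GTm M → GTm (.lam M)
    | ap {M N} : GTm M → GTm N → GTm (.ap M N)
    | lets {M N} : GTm M → GTm N → GTm (.lets M N)
    | bang {q M} : GTr q → GTm M → GTm (.bang q M)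
    | ann {q M} : GTr q → GTm M → GTm (.ann q M)
    | insp {ϑ} : (∀ i, GTm (ϑ i)) → GTm (.insp ϑ)
  /-- Grammar of στ-normal CAU⁻σ trails. -/
  inductive GTr : Tr → Prop
    | r : GTr .r
    | t {q q'} : GTr q → GTr q' → GTr (.t q q')
    | pb : GTr .pb
    | pbb : GTr .pbb
    | ti : GTr .ti
    | lam {q} : GTr q → GTr (.lam q)
    | ap {q q'} : GTr q → GTr q' → GTr (.ap q q')
    | lets {q q'} : GTr q → GTr q' → GTr (.lets q q')
    | tb {ζ} : (∀ i, GTr (ζ i)) → GTr (.tb ζ)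
end

/-- Grammar of σ-normal CAU⁻σ substitutions. -/
inductive GSb : Sb → Prop
  | id : GSb .id
  | shn (n) : GSb (pow n)
  | cons {M s} : GTm M → GSb s → GSb (.cons M s)

/-! ## Focused forms and meta-level projections -/

/-- Meta-level trail erasure ⌊M⌋*, relative to a normal form function. -/
def metaErase (nf : Tm → Tm) (M : Tm) : Tm :=
  match nf M with
  | .ann _ M' => M'
  | N => N

/-- Meta-level trail extraction ⌈M⌉*, relative to a normal form function. -/
def metaExt (nf : Tm → Tm) (M : Tm) : Tr :=
  match nf M with
  | .ann q _ => q
  | _ => .r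

/-- The focused form ⟨M⟩ = ⌈M⌉* ▷ ⌊M⌋*. -/
def focusT (nf : Tm → Tm) (M : Tm) : Tm := .ann (metaExt nf M) (metaErase nf M)

/-- Focusing a σ-normal substitution pointwise. -/
def focusSb (nf : Tm → Tm) : Sb → Sb
  | .cons M s => .cons (focusT nf M) (focusSb nf s)
  | s => s

end CAU
namespace CAU

/-! ## Embedding pure (σ-normal) terms into CAU⁻σ -/

/-- Embedding of pure trails. -/
def toTr : NTr → Tr
  | .r => .r
  | .t q q' => .t (toTr q) (toTr q')
  | .pb => .pb
  | .pbb => .pbb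
  | .ti => .ti
  | .lam q => .lam (toTr q)
  | .ap q q' => .ap (toTr q) (toTr q')
  | .lets q q' => .lets (toTr q) (toTr q')
  | .tb ζ => .tb fun i => toTr (ζ i)

/-- Embedding of pure terms: de Bruijn index `var n` (0-based) becomes `1[↑ⁿ]`. -/
def toTm : NTm → Tm
  | .var 0 => .one
  | .var (n+1) => .sub .one (pow n)
  | .lam M => .lam (toTm M)
  | .ap M N => .ap (toTm M) (toTm N)
  | .lets M N => .lets (toTm M) (toTm N)
  | .bang q M => .bang (toTr q) (toTm M)
  | .ann q M => .ann (toTr q) (toTm M)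
  | .insp ϑ => .insp fun i => toTm (ϑ i)

/-- `shiftP p` is the substitution `↑ᵖ` (with `↑⁰ = ⟨⟩`). -/
def shiftP : ℕ → Sb
  | 0 => .id
  | n + 1 => pow n

/-- The substitution `N₁ · … · N_k · ↑ᵖ`. -/
def mkSub : List Tm → ℕ → Sb
  | [], p => shiftP p
  | M :: l, p => .cons M (mkSub l p)

/-! ## Meta-level substitution on pure terms -/

/-- Lift by one all free indices ≥ d. -/
def liftN (d : ℕ) : NTm → NTm
  | .var n => if n < d then .var n else .var (n + 1)
  | .lam M => .lam (liftN (d+1) M)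
  | .ap M N => .ap (liftN d M) (liftN d N)
  | .lets M N => .lets (liftN d M) (liftN d (N))
  | .bang q M => .bang q (liftN d M)
  | .ann q M => .ann q (liftN d M)
  | .insp ϑ => .insp fun i => liftN d (ϑ i)

/-- Meta-level simultaneous substitution `M{N⃗}ₚ` on pure terms. -/
def msubst : NTm → ℕ → List NTm → NTm
  | .var n, p, l => if h : n < l.length then l.get ⟨n, h⟩ else .var (n - l.length + p)
  | .lam M, p, l => .lam (msubst M (p+1) (.var 0 :: l.map (liftN 0)))
  | .ap M N, p, l => .ap (msubst M p l) (msubst N p l)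
  | .lets M N, p, l => .lets (msubst M p l) (msubst N (p+1) (.var 0 :: l.map (liftN 0)))
  | .bang q M, p, l => .bang q (msubst M p l)
  | .ann q M, p, l => .ann q (msubst M p l)
  | .insp ϑ, p, l => .insp fun i => msubst (ϑ i) p l

/-! ## Trail inspection: structural recursion qϑ over trails -/

/-- Structural recursion `qϑ` over a pure trail, applying the nine inspection branches. -/
def recTrailN : NTr → (Fin 9 → NTm) → NTm
  | .r, ϑ => ϑ 0
  | .t q q', ϑ => .ap (.ap (ϑ 1) (recTrailN q ϑ)) (recTrailN q' ϑ)
  | .pb, ϑ => ϑ 2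
  | .pbb, ϑ => ϑ 3
  | .ti, ϑ => ϑ 4
  | .lam q, ϑ => .ap (ϑ 5) (recTrailN q ϑ)
  | .ap q q', ϑ => .ap (.ap (ϑ 6) (recTrailN q ϑ)) (recTrailN q' ϑ)
  | .lets q q', ϑ => .ap (.ap (ϑ 7) (recTrailN q ϑ)) (recTrailN q' ϑ)
  | .tb ζ, ϑ => (List.ofFn fun i => recTrailN (ζ i) ϑ).foldl .ap (ϑ 8)

/-- Structural recursion `qϑ` over a CAU⁻σ trail (junk value on explicit extractions,
which cannot occur in the στ-normal trails it is applied to). -/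
def recTrailT : Tr → (Fin 9 → Tm) → Tm
  | .r, ϑ => ϑ 0
  | .t q q', ϑ => .ap (.ap (ϑ 1) (recTrailT q ϑ)) (recTrailT q' ϑ)
  | .pb, ϑ => ϑ 2
  | .pbb, ϑ => ϑ 3
  | .ti, ϑ => ϑ 4
  | .lam q, ϑ => .ap (ϑ 5) (recTrailT q ϑ)
  | .ap q q', ϑ => .ap (.ap (ϑ 6) (recTrailT q ϑ)) (recTrailT q' ϑ)
  | .lets q q', ϑ => .ap (.ap (ϑ 7) (recTrailT q ϑ)) (recTrailT q' ϑ)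
  | .tb ζ, ϑ => (List.ofFn fun i => recTrailT (ζ i) ϑ).foldl .ap (ϑ 8)
  | .ext _, ϑ => ϑ 0

/-! ## Meta-level β-reduction on pure (σ-normal) terms -/

/-- One inspection step in a bang-free context of a pure term:
some `ι(ϑ)` not guarded by a bang is replaced by `ti ▷ qϑ`. -/
inductive FInspN (q : NTr) : NTm → NTm → Prop
  | insp (ϑ) : FInspN q (.insp ϑ) (.ann .ti (recTrailN q ϑ))
  | lam {M M'} : FInspN q M M' → FInspN q (.lam M) (.lam M')
  | apL {M M'} (N) : FInspN q M M' → FInspN q (.ap M N) (.ap M' N)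
  | apR {N N'} (M) : FInspN q N N' → FInspN q (.ap M N) (.ap M N')
  | letsL {M M'} (N) : FInspN q M M' → FInspN q (.lets M N) (.lets M' N)
  | letsR {N N'} (M) : FInspN q N N' → FInspN q (.lets M N) (.lets M N')
  | ann {M M'} (q') : FInspN q M M' → FInspN q (.ann q' M) (.ann q' M')
  | inspC {ϑ} (i : Fin 9) {M'} : FInspN q (ϑ i) M' →
      FInspN q (.insp ϑ) (.insp (Function.update ϑ i M'))

/-- Meta-level β-reduction on pure (σ-normal) terms, closed under σ-normal contexts. -/
inductive BetaN : NTm → NTm → Prop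
  | beta (M N) : BetaN (.ap (.lam M) N) (.ann .pb (msubst M 0 [N]))
  | betaBang (q M N) : BetaN (.lets (.bang q M) N) (.ann .pbb (msubst N 0 [.ann q M]))
  | insp {q M M'} : FInspN q M M' → BetaN (.bang q M) (.bang q M')
  | lam {M M'} : BetaN M M' → BetaN (.lam M) (.lam M')
  | apL {M M'} (N) : BetaN M M' → BetaN (.ap M N) (.ap M' N)
  | apR {N N'} (M) : BetaN N N' → BetaN (.ap M N) (.ap M N')
  | letsL {M M'} (N) : BetaN M M' → BetaN (.lets M N) (.lets M' N)
  | letsR {N N'} (M) : BetaN N N' → BetaN (.lets M N) (.lets M N')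
  | bang {M M'} (q) : BetaN M M' → BetaN (.bang q M) (.bang q M')
  | ann {M M'} (q) : BetaN M M' → BetaN (.ann q M) (.ann q M')
  | inspC {ϑ} (i : Fin 9) {M'} : BetaN (ϑ i) M' →
      BetaN (.insp ϑ) (.insp (Function.update ϑ i M'))

/-! ## Lazy Beta-reduction of CAU⁻σ -/

/-- One inspection step in a context whose hole is not inside a bang, a substitution,
or an erasure: some `ι(ϑ)` is replaced by `ti ▷ qϑ`. -/
inductive FInspT (q : Tr) : Tm → Tm → Prop
  | insp (ϑ) : FInspT q (.insp ϑ) (.ann .ti (recTrailT q ϑ))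
  | lam {M M'} : FInspT q M M' → FInspT q (.lam M) (.lam M')
  | apL {M M'} (N) : FInspT q M M' → FInspT q (.ap M N) (.ap M' N)
  | apR {N N'} (M) : FInspT q N N' → FInspT q (.ap M N) (.ap M N')
  | letsL {M M'} (N) : FInspT q M M' → FInspT q (.lets M N) (.lets M' N)
  | letsR {N N'} (M) : FInspT q N N' → FInspT q (.lets M N) (.lets M N')
  | ann {M M'} (q') : FInspT q M M' → FInspT q (.ann q' M) (.ann q' M')
  | inspC {ϑ} (i : Fin 9) {M'} : FInspT q (ϑ i) M' →
      FInspT q (.insp ϑ) (.insp (Function.update ϑ i M'))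

mutual
  /-- The lazy Beta-relation of CAU⁻σ (relative to a normal form function `nfq`
  for trails, used in the trail inspection rule), closed under evaluation contexts
  `E_σ` whose hole does not occur inside an erasure. -/
  inductive LBeta (nfq : Tr → Tr) : Tm → Tm → Prop
    | beta (M N) :
        LBeta nfq (.ap (.lam M) N)
          (.ann (.t (.ap (.lam (.ext M)) (.ext N)) .pb) (.sub (.er M) (.cons (.er N) .id)))
    | betaBang (q M N) :
        LBeta nfq (.lets (.bang q M) N)
          (.ann (.t (.lets .r (.ext N)) .pbb) (.sub (.er N) (.cons (.ann q M) .id)))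
    | insp {q M M'} : FInspT (nfq (.t q (.ext M))) M M' →
        LBeta nfq (.bang q M) (.bang q M')
    | lam {M M'} : LBeta nfq M M' → LBeta nfq (.lam M) (.lam M')
    | apL {M M'} (N) : LBeta nfq M M' → LBeta nfq (.ap M N) (.ap M' N)
    | apR {N N'} (M) : LBeta nfq N N' → LBeta nfq (.ap M N) (.ap M N')
    | letsL {M M'} (N) : LBeta nfq M M' → LBeta nfq (.lets M N) (.lets M' N)
    | letsR {N N'} (M) : LBeta nfq N N' → LBeta nfq (.lets M N) (.lets M N')
    | bang {M M'} (q) : LBeta nfq M M' → LBeta nfq (.bang q M) (.bang q M')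
    | ann {M M'} (q) : LBeta nfq M M' → LBeta nfq (.ann q M) (.ann q M')
    | inspC {ϑ} (i : Fin 9) {M'} : LBeta nfq (ϑ i) M' →
        LBeta nfq (.insp ϑ) (.insp (Function.update ϑ i M'))
    | subM {M M'} (s) : LBeta nfq M M' → LBeta nfq (.sub M s) (.sub M' s)
    | subS {s s'} (M) : LBetaSub nfq s s' → LBeta nfq (.sub M s) (.sub M s')
  /-- Lazy Beta-reduction inside substitutions. -/
  inductive LBetaSub (nfq : Tr → Tr) : Sb → Sb → Prop
    | consM {M M'} (s) : LBeta nfq M M' → LBetaSub nfq (.cons M s) (.cons M' s)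
    | consS {s s'} (M) : LBetaSub nfq s s' → LBetaSub nfq (.cons M s) (.cons M s')
    | compL {s s''} (t) : LBetaSub nfq s s'' → LBetaSub nfq (.comp s t) (.comp s'' t)
    | compR {t t'} (s) : LBetaSub nfq t t' → LBetaSub nfq (.comp s t) (.comp s t')
end

/-- CAU⁻σ reduction: the union of Beta-reduction and στ-equivalence. -/
def SRed (nfq : Tr → Tr) (M N : Tm) : Prop :=
  LBeta nfq M N ∨ Relation.EqvGen StepT M N

/-! ## Naive (eager) CAU⁻ reduction on στ-normal terms -/

/-- A principal contraction in the style of CAU⁻ (using an explicit substitution for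
the redex, to be normalized away immediately afterwards), closed under arbitrary
CAU⁻ contexts. -/
inductive NaiveBeta : Tm → Tm → Prop
  | beta (M N) : NaiveBeta (.ap (.lam M) N) (.ann .pb (.sub M (.cons N .id)))
  | betaBang (q M N) :
      NaiveBeta (.lets (.bang q M) N) (.ann .pbb (.sub N (.cons (.ann q M) .id)))
  | insp {q M M'} : FInspT q M M' → NaiveBeta (.bang q M) (.bang q M')
  | lam {M M'} : NaiveBeta M M' → NaiveBeta (.lam M) (.lam M')
  | apL {M M'} (N) : NaiveBeta M M' → NaiveBeta (.ap M N) (.ap M' N)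
  | apR {N N'} (M) : NaiveBeta N N' → NaiveBeta (.ap M N) (.ap M N')
  | letsL {M M'} (N) : NaiveBeta M M' → NaiveBeta (.lets M N) (.lets M' N)
  | letsR {N N'} (M) : NaiveBeta N N' → NaiveBeta (.lets M N) (.lets M N')
  | bang {M M'} (q) : NaiveBeta M M' → NaiveBeta (.bang q M) (.bang q M')
  | ann {M M'} (q) : NaiveBeta M M' → NaiveBeta (.ann q M) (.ann q M')
  | inspC {ϑ} (i : Fin 9) {M'} : NaiveBeta (ϑ i) M' →
      NaiveBeta (.insp ϑ) (.insp (Function.update ϑ i M'))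

/-- One step of CAU⁻ reduction: a principal contraction followed by normalization. -/
def CRed (nf : Tm → Tm) (M N : Tm) : Prop := ∃ R, NaiveBeta M R ∧ N = nf R

/-! ## The eager β̄-reduction on focused forms -/

/-- β̄-reduction: the relation on focused forms induced by meta-level β on pure terms. -/
def BbarT (nf : Tm → Tm) (A B : Tm) : Prop :=
  ∃ M N : NTm, BetaN M N ∧ A = focusT nf (toTm M) ∧ B = focusT nf (toTm N)

/-- Focusing of a σ-normal substitution `N⃗ · ↑ᵖ` given by a list of pure terms. -/
def focusNSub (nf : Tm → Tm) (l : List NTm) (p : ℕ) : Sb :=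
  mkSub (l.map fun M => focusT nf (toTm M)) p

/-- β̄-reduction on focused substitutions: one component β-reduces. -/
def BbarS (nf : Tm → Tm) (A B : Sb) : Prop :=
  ∃ (l : List NTm) (p : ℕ) (i : ℕ) (h : i < l.length) (N' : NTm),
    BetaN (l.get ⟨i, h⟩) N' ∧ A = focusNSub nf l p ∧ B = focusNSub nf (l.set i N') p

/-- One-hole σ-normal contexts over pure terms. -/
inductive NCtx : Type
  | hole : NCtx
  | lam : NCtx → NCtx
  | apL : NCtx → NTm → NCtx
  | apR : NTm → NCtx → NCtx
  | letsL : NCtx → NTm → NCtx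
  | letsR : NTm → NCtx → NCtx
  | bang : NTr → NCtx → NCtx
  | ann : NTr → NCtx → NCtx
  | insp : (Fin 9 → NTm) → Fin 9 → NCtx → NCtx

/-- Filling the hole of a σ-normal context. -/
def fillN : NCtx → NTm → NTm
  | .hole, X => X
  | .lam C, X => .lam (fillN C X)
  | .apL C N, X => .ap (fillN C X) N
  | .apR M C, X => .ap M (fillN C X)
  | .letsL C N, X => .lets (fillN C X) N
  | .letsR M C, X => .lets M (fillN C X)
  | .bang q C, X => .bang q (fillN C X)
  | .ann q C, X => .ann q (fillN C X)
  | .insp ϑ i C, X => .insp (Function.update ϑ i (fillN C X))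

end CAU
namespace CAU

/-! ## The call-by-value abstract machine -/

mutual
  /-- Machine closures. -/
  inductive Clo : Type
    | lamC : NTm → Env → Clo          -- ⌊(λM̂)[e]⌋
    | bangC : Tr → Clo → Clo          -- !_q C
  /-- Machine values `q ▷ C`. -/
  inductive Val : Type
    | mk : Tr → Clo → Val
  /-- Machine environments: lists of values. -/
  inductive Env : Type
    | nil : Env
    | cons : Val → Env → Env
end

instance : Inhabited Clo := ⟨.lamC (.var 0) .nil⟩
instance : Inhabited Val := ⟨.mk .r default⟩
instance : Inhabited Env := ⟨.nil⟩

/-- The trail of a value. -/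
def Val.tr : Val → Tr | .mk q _ => q
/-- The closure of a value. -/
def Val.clo : Val → Clo | .mk _ C => C

/-- Length of an environment. -/
def envLen : Env → ℕ
  | .nil => 0
  | .cons _ e => envLen e + 1

/-- Environment lookup `e(n)`, returning the n-th closure (0-based). -/
def lookupE : Env → ℕ → Option Clo
  | .cons (.mk _ C) _, 0 => some C
  | .cons _ e, n + 1 => lookupE e n
  | .nil, _ => none

mutual
  /-- The CAU⁻σ term denoted by a closure. -/
  def cloToTm : Clo → Tm
    | .lamC M e => .er (.sub (.lam (toTm M)) (envToSub e))
    | .bangC q C => .bang q (cloToTm C)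
  /-- The CAU⁻σ term denoted by a value. -/
  def valToTm : Val → Tm
    | .mk q C => .ann q (cloToTm C)
  /-- The explicit substitution denoted by an environment. -/
  def envToSub : Env → Sb
    | .nil => .id
    | .cons V e => .cons (valToTm V) (envToSub e)
end

/-- Pure terms closed below depth `d` (all free indices < d). -/
def closedN (d : ℕ) : NTm → Prop
  | .var n => n < d
  | .lam M => closedN (d+1) M
  | .ap M N => closedN d M ∧ closedN d N
  | .lets M N => closedN d M ∧ closedN (d+1) N
  | .bang _ M => closedN d M
  | .ann _ M => closedN d M
  | .insp ϑ => ∀ i, closedN d (ϑ i)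

mutual
  /-- Closed closures. -/
  def closedClo : Clo → Prop
    | .lamC M e => closedN (envLen e + 1) M ∧ closedEnv e
    | .bangC _ C => closedClo C
  /-- Closed values. -/
  def closedVal : Val → Prop
    | .mk _ C => closedClo C
  /-- Closed environments. -/
  def closedEnv : Env → Prop
    | .nil => True
    | .cons V e => closedVal V ∧ closedEnv e
end

/-- Machine codes: pure terms or fragments of abstract syntax tree. -/
inductive Code : Type
  | tm : NTm → Code
  | ap : Code
  | bg : Code
  | lt : NTm → Code
  | ins : Code

/-- Stack tuples `(q | κ | e)`. -/
structure Tup where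
  q : Tr
  κ : Code
  e : Env

instance : Inhabited Tup := ⟨⟨.r, .ap, .nil⟩⟩

/-- Stacks. -/
abbrev Stack := List Tup
/-- Dumps. -/
abbrev Dump := List Val
/-- Machine configurations. -/
abbrev Config := Stack × Dump

/-- The tuple for a pending inspection branch. -/
def brTup (x : Tr × NTm × Env) : Tup := ⟨x.1, .tm x.2.1, x.2.2⟩

mutual
  /-- Well-formed context configurations. -/
  inductive WfCtx : Stack → Dump → Prop
    | nil : WfCtx [] []
    | apTm {π D} (q q' M e) : WfCtx π D →
        WfCtx (⟨q, .tm M, e⟩ :: ⟨q', .ap, .nil⟩ :: π) D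
    | apVal {π D} (q V) : WfCtx π D → WfCtx (⟨q, .ap, .nil⟩ :: π) (V :: D)
    | lt {π D} (q M e) : WfCtx π D → WfCtx (⟨q, .lt M, e⟩ :: π) D
    | bg {π D} (q) : WfCtx π D → WfCtx (⟨q, .bg, .nil⟩ :: π) D
    | ins {π D} (q') (ts : List (Tr × NTm × Env)) (vs : List Val) :
        vs.length + ts.length = 8 → WfCtx π D →
        WfCtx (ts.map brTup ++ ⟨q', .ins, .nil⟩ :: π) (vs ++ D)
  /-- Well-formed term configurations. -/
  inductive WfTm : Stack → Dump → Prop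
    | fin (V) : WfTm [] [V]
    | tm {π D} (q M e) : WfCtx π D → WfTm (⟨q, .tm M, e⟩ :: π) D
    | ap {π D} (q V W) : WfCtx π D → WfTm (⟨q, .ap, .nil⟩ :: π) (W :: V :: D)
    | lt {π D} (q M e V) : WfCtx π D → WfTm (⟨q, .lt M, e⟩ :: π) (V :: D)
    | bg {π D} (q V) : WfCtx π D → WfTm (⟨q, .bg, .nil⟩ :: π) (V :: D)
    | ins {π D} (q) (vs : List Val) : vs.length = 9 → WfCtx π D →
        WfTm (⟨q, .ins, .nil⟩ :: π) (vs ++ D)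
end

/-- The term denoted by a pending-branch tuple. -/
def tupDen (x : Tr × NTm × Env) : Tm := .ann x.1 (.er (.sub (toTm x.2.1) (envToSub x.2.2)))

mutual
  /-- Denotation of context configurations as CAU⁻σ one-hole contexts. -/
  inductive CtxDen : Stack → Dump → (Tm → Tm) → Prop
    | nil : CtxDen [] [] id
    | apTm {π D E} (q q' M e) : CtxDen π D E →
        CtxDen (⟨q, .tm M, e⟩ :: ⟨q', .ap, .nil⟩ :: π) D
          (fun X => E (.ann q' (.ap X (.ann q (.er (.sub (toTm M) (envToSub e)))))))
    | apVal {π D E} (q V) : CtxDen π D E →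
        CtxDen (⟨q, .ap, .nil⟩ :: π) (V :: D) (fun X => E (.ann q (.ap (valToTm V) X)))
    | lt {π D E} (q N e) : CtxDen π D E →
        CtxDen (⟨q, .lt N, e⟩ :: π) D
          (fun X => E (.ann q (.lets X
            (.er (.sub (toTm N) (.cons .one (.comp (envToSub e) .sh)))))))
    | bg {π D E} (q) : CtxDen π D E →
        CtxDen (⟨q, .bg, .nil⟩ :: π) D (fun X => E (.ann q (.bang .r X)))
    | ins {π D E} (q') (ts : List (Tr × NTm × Env)) (vs : List Val) :
        vs.length + ts.length = 8 → CtxDen π D E →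
        CtxDen (ts.map brTup ++ ⟨q', .ins, .nil⟩ :: π) (vs ++ D)
          (fun X => E (.ann q' (.insp fun i =>
            if h : (i : ℕ) < vs.length then valToTm (vs.get ⟨i, h⟩)
            else if (i : ℕ) = vs.length then X
            else tupDen (ts.getD ((i : ℕ) - vs.length - 1) default))))
  /-- Denotation of term configurations as CAU⁻σ terms. -/
  inductive TmDen : Stack → Dump → Tm → Prop
    | fin (V) : TmDen [] [V] (valToTm V)
    | tm {π D E} (q M e) : CtxDen π D E →
        TmDen (⟨q, .tm M, e⟩ :: π) D (E (.ann q (.er (.sub (toTm M) (envToSub e)))))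
    | ap {π D E} (q V W) : CtxDen π D E →
        TmDen (⟨q, .ap, .nil⟩ :: π) (W :: V :: D) (E (.ann q (.ap (valToTm V) (valToTm W))))
    | lt {π D E} (q N e V) : CtxDen π D E →
        TmDen (⟨q, .lt N, e⟩ :: π) (V :: D)
          (E (.ann q (.lets (valToTm V)
            (.er (.sub (toTm N) (.cons .one (.comp (envToSub e) .sh)))))))
    | bg {π D E} (q V) : CtxDen π D E →
        TmDen (⟨q, .bg, .nil⟩ :: π) (V :: D) (E (.ann q (.bang .r (valToTm V))))
    | ins {π D E} (q) (vs : List Val) : vs.length = 9 → CtxDen π D E →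
        TmDen (⟨q, .ins, .nil⟩ :: π) (vs ++ D)
          (E (.ann q (.insp fun i => valToTm (vs.getD (i : ℕ) default))))
end

/-- The trail-collection operator `I(q_ϑ, π, D)` materializing the trail of the
enclosing bang for trail inspection. -/
inductive IRel (nfq : Tr → Tr) : Tr → Stack → Dump → Tr → Prop
  | bg {qθ π D} (q') : IRel nfq qθ (⟨q', .bg, .nil⟩ :: π) D (nfq qθ)
  | apTm {qθ π D res} (q q' M e) :
      IRel nfq (.t q' (.ap qθ q)) π D res →
      IRel nfq qθ (⟨q, .tm M, e⟩ :: ⟨q', .ap, .nil⟩ :: π) D res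
  | apVal {qθ π D res} (q q'' C) :
      IRel nfq (.t q (.ap q'' qθ)) π D res →
      IRel nfq qθ (⟨q, .ap, .nil⟩ :: π) (Val.mk q'' C :: D) res
  | lt {qθ π D res} (q N e) :
      IRel nfq (.t q (.lets qθ .r)) π D res →
      IRel nfq qθ (⟨q, .lt N, e⟩ :: π) D res
  | ins {qθ π D res} (q') (ts : List (Tr × NTm × Env)) (vs : List Val) :
      vs.length + ts.length = 8 →
      IRel nfq (.t q' (.tb fun i =>
          if h : (i : ℕ) < vs.length then (vs.get ⟨i, h⟩).tr
          else if (i : ℕ) = vs.length then qθ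
          else (ts.getD ((i : ℕ) - vs.length - 1) default).1)) π D res →
      IRel nfq qθ (ts.map brTup ++ ⟨q', .ins, .nil⟩ :: π) (vs ++ D) res

/-- The inspection trail of nine evaluated branches, as a term (de Bruijn encoding of
trail constructors as the dangling indices 1..9). -/
def tTT : Tr → NTm
  | .r => .var 0
  | .t q q' => .ap (.ap (.var 1) (tTT q)) (tTT q')
  | .pb => .var 2
  | .pbb => .var 3
  | .ti => .var 4
  | .lam q => .ap (.var 5) (tTT q)
  | .ap q q' => .ap (.ap (.var 6) (tTT q)) (tTT q')
  | .lets q q' => .ap (.ap (.var 7) (tTT q)) (tTT q')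
  | .tb ζ => (List.ofFn fun i => tTT (ζ i)).foldl .ap (.var 8)
  | .ext _ => .var 0

/-- The environment `[r ▷ C₁, …, r ▷ C₉]` of inspection branches. -/
def mkEnv (vs : List Val) : Env := vs.foldr (fun V e => .cons (.mk .r V.clo) e) .nil

/-- Transition relation of the call-by-value abstract machine. -/
inductive MStep (nfq : Tr → Tr) : Config → Config → Prop
  | r1 {π D} (q M N e) :
      MStep nfq (⟨q, .tm (.ap M N), e⟩ :: π, D)
        (⟨.r, .tm M, e⟩ :: ⟨.r, .tm N, e⟩ :: ⟨q, .ap, .nil⟩ :: π, D)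
  | r2 {π D} (q q' C q'' M e) :
      MStep nfq (⟨q, .ap, .nil⟩ :: π, Val.mk q' C :: Val.mk q'' (.lamC M e) :: D)
        (⟨.t q (.t (.ap q'' q') .pb), .tm M, .cons (.mk .r C) e⟩ :: π, D)
  | r3 {π D} (q M e) :
      MStep nfq (⟨q, .tm (.lam M), e⟩ :: π, D) (π, Val.mk q (.lamC M e) :: D)
  | r4 {π D} (q M N e) :
      MStep nfq (⟨q, .tm (.lets M N), e⟩ :: π, D)
        (⟨.r, .tm M, e⟩ :: ⟨q, .lt N, e⟩ :: π, D)
  | r5 {π D} (q N e q' V) :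
      MStep nfq (⟨q, .lt N, e⟩ :: π, Val.mk q' (.bangC V.tr V.clo) :: D)
        (⟨.t q (.t (.lets q' .r) (.t .pbb
            (.ext (.sub (.er (.sub (toTm N) (.cons .one (.comp (envToSub e) .sh))))
              (.cons (valToTm V) .id))))),
          .tm N, .cons V e⟩ :: π, D)
  | r6 {π D} (q q' M e) :
      MStep nfq (⟨q, .tm (.bang q' M), e⟩ :: π, D)
        (⟨.t (toTr q') (.ext (.sub (toTm M) (envToSub e))), .tm M, e⟩ :: ⟨q, .bg, .nil⟩ :: π, D)
  | r7 {π D} (q V) :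
      MStep nfq (⟨q, .bg, .nil⟩ :: π, V :: D) (π, Val.mk q (.bangC V.tr V.clo) :: D)
  | r8 {π D} (q ϑ e) :
      MStep nfq (⟨q, .tm (.insp ϑ), e⟩ :: π, D)
        ((List.ofFn fun i : Fin 9 => Tup.mk .r (.tm (ϑ i)) e) ++ ⟨q, .ins, .nil⟩ :: π, D)
  | r9 {π D} (q) (vs : List Val) (qres : Tr) :
      vs.length = 9 →
      IRel nfq (.t q (.tb fun i => (vs.getD (i : ℕ) default).tr)) π D qres →
      MStep nfq (⟨q, .ins, .nil⟩ :: π, vs ++ D)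
        (⟨.t q (.t (.tb fun i => (vs.getD (i : ℕ) default).tr) .ti),
          .tm (tTT qres), mkEnv vs⟩ :: π, D)
  | r10 {π D} (q n e C) :
      lookupE e n = some C →
      MStep nfq (⟨q, .tm (.var n), e⟩ :: π, D) (π, Val.mk q C :: D)

/-- Closedness conditions on stack tuples. -/
def TupClosed : Tup → Prop
  | ⟨_, .tm M, e⟩ => closedN (envLen e) M ∧ closedEnv e
  | ⟨_, .lt N, e⟩ => closedN (envLen e + 1) N ∧ closedEnv e
  | ⟨_, _, e⟩ => closedEnv e

/-- Valid machine states: well-formed term configurations whose tuples and dump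
values are closed. -/
def Valid (ς : Config) : Prop :=
  WfTm ς.1 ς.2 ∧ (∀ t ∈ ς.1, TupClosed t) ∧ (∀ V ∈ ς.2, closedVal V)

end CAU

namespace CAU

/-! ### Auxiliary development for the admissible let-bang rule -/

section LetBangAdm

abbrev EqT : Tm → Tm → Prop := Relation.EqvGen StepT
abbrev EqQ : Tr → Tr → Prop := Relation.EqvGen StepQ
abbrev EqS : Sb → Sb → Prop := Relation.EqvGen StepS

theorem egMap {α β : Type _} {r : α → α → Prop} {s : β → β → Prop} (f : α → β)
    (hf : ∀ a b, r a b → s (f a) (f b)) :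
    ∀ {a b}, Relation.EqvGen r a b → Relation.EqvGen s (f a) (f b) := by
  intro a b h
  induction h with
  | rel x y hxy => exact .rel _ _ (hf _ _ hxy)
  | refl x => exact .refl _
  | symm x y _ ih => exact Relation.EqvGen.symm _ _ ih
  | trans x y z _ _ ih1 ih2 => exact Relation.EqvGen.trans _ _ _ ih1 ih2

instance {α : Type _} {r : α → α → Prop} :
    Trans (Relation.EqvGen r) (Relation.EqvGen r) (Relation.EqvGen r) :=
  ⟨fun h1 h2 => Relation.EqvGen.trans _ _ _ h1 h2⟩

theorem _root_.Relation.EqvGen.trans' {α : Type _} {r : α → α → Prop} {a b c : α}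
    (h1 : Relation.EqvGen r a b) (h2 : Relation.EqvGen r b c) : Relation.EqvGen r a c :=
  Relation.EqvGen.trans _ _ _ h1 h2

theorem _root_.Relation.EqvGen.symm' {α : Type _} {r : α → α → Prop} {a b : α}
    (h : Relation.EqvGen r a b) : Relation.EqvGen r b a :=
  Relation.EqvGen.symm _ _ h

/- term congruences -/
theorem eqT_lam {M M'} (h : EqT M M') : EqT (.lam M) (.lam M') :=
  egMap Tm.lam (fun _ _ => .lamC) h
theorem eqT_ap {M M' N N'} (h1 : EqT M M') (h2 : EqT N N') : EqT (.ap M N) (.ap M' N') :=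
  (egMap (fun X => Tm.ap X N) (fun _ _ => .apL N) h1).trans'
    (egMap (fun X => Tm.ap M' X) (fun _ _ => .apR M') h2)
theorem eqT_lets {M M' N N'} (h1 : EqT M M') (h2 : EqT N N') :
    EqT (.lets M N) (.lets M' N') :=
  (egMap (fun X => Tm.lets X N) (fun _ _ => .letsL N) h1).trans'
    (egMap (fun X => Tm.lets M' X) (fun _ _ => .letsR M') h2)
theorem eqT_bang {q q' M M'} (h1 : EqQ q q') (h2 : EqT M M') :
    EqT (.bang q M) (.bang q' M') :=
  (egMap (fun X => Tm.bang X M) (fun _ _ => .bangQ M) h1).trans'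
    (egMap (fun X => Tm.bang q' X) (fun _ _ => .bangM q') h2)
theorem eqT_ann {q q' M M'} (h1 : EqQ q q') (h2 : EqT M M') :
    EqT (.ann q M) (.ann q' M') :=
  (egMap (fun X => Tm.ann X M) (fun _ _ => .annQ M) h1).trans'
    (egMap (fun X => Tm.ann q' X) (fun _ _ => .annM q') h2)
theorem eqT_annQ {q q'} (M) (h : EqQ q q') : EqT (.ann q M) (.ann q' M) :=
  eqT_ann h (.refl M)
theorem eqT_annM (q) {M M'} (h : EqT M M') : EqT (.ann q M) (.ann q M') :=
  eqT_ann (.refl q) h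
theorem eqT_sub {M M' s s'} (h1 : EqT M M') (h2 : EqS s s') :
    EqT (.sub M s) (.sub M' s') :=
  (egMap (fun X => Tm.sub X s) (fun _ _ => .subM s) h1).trans'
    (egMap (fun X => Tm.sub M' X) (fun _ _ => .subS M') h2)
theorem eqT_subM (s) {M M'} (h : EqT M M') : EqT (.sub M s) (.sub M' s) :=
  eqT_sub h (.refl s)
theorem eqT_subS (M) {s s'} (h : EqS s s') : EqT (.sub M s) (.sub M s') :=
  eqT_sub (.refl M) h
theorem eqT_er {M M'} (h : EqT M M') : EqT (.er M) (.er M') :=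
  egMap Tm.er (fun _ _ => .erC) h

/- trail congruences -/
theorem eqQ_t {q1 q1' q2 q2'} (h1 : EqQ q1 q1') (h2 : EqQ q2 q2') :
    EqQ (.t q1 q2) (.t q1' q2') :=
  (egMap (fun X => Tr.t X q2) (fun _ _ => .tL q2) h1).trans'
    (egMap (fun X => Tr.t q1' X) (fun _ _ => .tR q1') h2)
theorem eqQ_lam {q q'} (h : EqQ q q') : EqQ (.lam q) (.lam q') :=
  egMap Tr.lam (fun _ _ => .lamC) h
theorem eqQ_ap {q1 q1' q2 q2'} (h1 : EqQ q1 q1') (h2 : EqQ q2 q2') :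
    EqQ (.ap q1 q2) (.ap q1' q2') :=
  (egMap (fun X => Tr.ap X q2) (fun _ _ => .apL q2) h1).trans'
    (egMap (fun X => Tr.ap q1' X) (fun _ _ => .apR q1') h2)
theorem eqQ_lets {q1 q1' q2 q2'} (h1 : EqQ q1 q1') (h2 : EqQ q2 q2') :
    EqQ (.lets q1 q2) (.lets q1' q2') :=
  (egMap (fun X => Tr.lets X q2) (fun _ _ => .letsL q2) h1).trans'
    (egMap (fun X => Tr.lets q1' X) (fun _ _ => .letsR q1') h2)
theorem eqQ_ext {M M'} (h : EqT M M') : EqQ (.ext M) (.ext M') :=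
  egMap Tr.ext (fun _ _ => .extC) h

/- substitution congruences -/
theorem eqS_cons {M M' s s'} (h1 : EqT M M') (h2 : EqS s s') :
    EqS (.cons M s) (.cons M' s') :=
  (egMap (fun X => Sb.cons X s) (fun _ _ => .consM s) h1).trans'
    (egMap (fun X => Sb.cons M' X) (fun _ _ => .consS M') h2)
theorem eqS_comp {s s' t t'} (h1 : EqS s s') (h2 : EqS t t') :
    EqS (.comp s t) (.comp s' t') :=
  (egMap (fun X => Sb.comp X t) (fun _ _ => .compL t) h1).trans'
    (egMap (fun X => Sb.comp s' X) (fun _ _ => .compR s') h2)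

theorem eqT_insp_update (ϑ : Fin 9 → Tm) (i : Fin 9) {M'} (h : EqT (ϑ i) M') :
    EqT (.insp ϑ) (.insp (Function.update ϑ i M')) := by
  have step : ∀ a b, StepT a b →
      StepT (.insp (Function.update ϑ i a)) (.insp (Function.update ϑ i b)) := by
    intro a b hab
    have := StepT.inspC (ϑ := Function.update ϑ i a) i (M' := b)
      (by rw [Function.update_self]; exact hab)
    rwa [Function.update_idem] at this
  have := egMap (fun X => Tm.insp (Function.update ϑ i X)) step h
  rwa [Function.update_eq_self] at this

theorem eqQ_tb_update (ζ : Fin 9 → Tr) (i : Fin 9) {q'} (h : EqQ (ζ i) q') :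
    EqQ (.tb ζ) (.tb (Function.update ζ i q')) := by
  have step : ∀ a b, StepQ a b →
      StepQ (.tb (Function.update ζ i a)) (.tb (Function.update ζ i b)) := by
    intro a b hab
    have := StepQ.tbC (ζ := Function.update ζ i a) i (q' := b)
      (by rw [Function.update_self]; exact hab)
    rwa [Function.update_idem] at this
  have := egMap (fun X => Tr.tb (Function.update ζ i X)) step h
  rwa [Function.update_eq_self] at this

theorem eqT_insp {ϑ ϑ' : Fin 9 → Tm} (h : ∀ i, EqT (ϑ i) (ϑ' i)) :
    EqT (.insp ϑ) (.insp ϑ') := by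
  have key : ∀ k : ℕ, k ≤ 9 →
      EqT (.insp ϑ) (.insp fun i => if (i : ℕ) < k then ϑ' i else ϑ i) := by
    intro k
    induction k with
    | zero =>
      intro _
      have hfun : (fun i : Fin 9 => if (i : ℕ) < 0 then ϑ' i else ϑ i) = ϑ := by
        funext i; simp
      rw [hfun]
      exact .refl _
    | succ k ih =>
      intro hk
      have hkk : k < 9 := hk
      refine (ih (Nat.le_of_succ_le hk)).trans' ?_
      have h1 := eqT_insp_update (fun i => if (i : ℕ) < k then ϑ' i else ϑ i) ⟨k, hkk⟩
        (M' := ϑ' ⟨k, hkk⟩) (by simpa using h ⟨k, hkk⟩)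
      have h2 : Function.update (fun i : Fin 9 => if (i : ℕ) < k then ϑ' i else ϑ i)
          ⟨k, hkk⟩ (ϑ' ⟨k, hkk⟩) = fun i : Fin 9 => if (i : ℕ) < k + 1 then ϑ' i else ϑ i := by
        funext i
        by_cases hik : i = ⟨k, hkk⟩
        · subst hik; simp
        · rw [Function.update_of_ne hik]
          have hne : (i : ℕ) ≠ k := fun hc => hik (Fin.ext hc)
          by_cases h3 : (i : ℕ) < k
          · rw [if_pos h3, if_pos (by omega)]
          · rw [if_neg h3, if_neg (by omega)]
      rw [h2] at h1
      exact h1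
  have h9 : (fun i : Fin 9 => if (i : ℕ) < 9 then ϑ' i else ϑ i) = ϑ' := by
    funext i; rw [if_pos i.isLt]
  have := key 9 le_rfl
  rwa [h9] at this

theorem eqQ_tb {ζ ζ' : Fin 9 → Tr} (h : ∀ i, EqQ (ζ i) (ζ' i)) :
    EqQ (.tb ζ) (.tb ζ') := by
  have key : ∀ k : ℕ, k ≤ 9 →
      EqQ (.tb ζ) (.tb fun i => if (i : ℕ) < k then ζ' i else ζ i) := by
    intro k
    induction k with
    | zero =>
      intro _
      have hfun : (fun i : Fin 9 => if (i : ℕ) < 0 then ζ' i else ζ i) = ζ := by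
        funext i; simp
      rw [hfun]
      exact .refl _
    | succ k ih =>
      intro hk
      have hkk : k < 9 := hk
      refine (ih (Nat.le_of_succ_le hk)).trans' ?_
      have h1 := eqQ_tb_update (fun i => if (i : ℕ) < k then ζ' i else ζ i) ⟨k, hkk⟩
        (q' := ζ' ⟨k, hkk⟩) (by simpa using h ⟨k, hkk⟩)
      have h2 : Function.update (fun i : Fin 9 => if (i : ℕ) < k then ζ' i else ζ i)
          ⟨k, hkk⟩ (ζ' ⟨k, hkk⟩) = fun i : Fin 9 => if (i : ℕ) < k + 1 then ζ' i else ζ i := by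
        funext i
        by_cases hik : i = ⟨k, hkk⟩
        · subst hik; simp
        · rw [Function.update_of_ne hik]
          have hne : (i : ℕ) ≠ k := fun hc => hik (Fin.ext hc)
          by_cases h3 : (i : ℕ) < k
          · rw [if_pos h3, if_pos (by omega)]
          · rw [if_neg h3, if_neg (by omega)]
      rw [h2] at h1
      exact h1
  have h9 : (fun i : Fin 9 => if (i : ℕ) < 9 then ζ' i else ζ i) = ζ' := by
    funext i; rw [if_pos i.isLt]
  have := key 9 le_rfl
  rwa [h9] at this

/-- Pulling the nine annotations of an inspection out as a `tb`-trail. -/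
theorem insp_ann (a : Fin 9 → Tr) (b : Fin 9 → Tm) :
    EqT (.insp fun i => .ann (a i) (b i)) (.ann (.tb a) (.insp b)) := by
  suffices h : ∀ d k, k + d = 9 →
      EqT (.insp fun i => if (i : ℕ) < k then b i else .ann (a i) (b i))
        (.ann (.tb fun i => if (i : ℕ) < k then .r else a i) (.insp b)) by
    have := h 9 0 rfl
    simpa using this
  intro d
  induction d with
  | zero =>
    intro k hk
    have hfun : (fun i : Fin 9 => if (i : ℕ) < k then b i else .ann (a i) (b i)) = b := by
      funext i; exact if_pos (by omega)
    have hfun2 : (fun i : Fin 9 => if (i : ℕ) < k then Tr.r else a i) = fun _ => Tr.r := by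
      funext i; exact if_pos (by omega)
    rw [hfun, hfun2]
    refine Relation.EqvGen.symm' ?_
    exact (eqT_annQ _ (.rel _ _ .tbRefl)).trans' (.rel _ _ (.annRefl _))
  | succ d ih =>
    intro k hk
    have hk9 : k < 9 := by omega
    have st : StepT (.insp fun i => if (i : ℕ) < k then b i else .ann (a i) (b i))
        (.ann (.tb (Function.update (fun _ => Tr.r) ⟨k, hk9⟩ (a ⟨k, hk9⟩)))
          (.insp (Function.update (fun i => if (i : ℕ) < k then b i else .ann (a i) (b i))
            ⟨k, hk9⟩ (b ⟨k, hk9⟩)))) :=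
      StepT.inspAnn _ ⟨k, hk9⟩ _ _ (by simp)
    have hupd : Function.update
        (fun i : Fin 9 => if (i : ℕ) < k then b i else .ann (a i) (b i)) ⟨k, hk9⟩ (b ⟨k, hk9⟩)
        = fun i : Fin 9 => if (i : ℕ) < k + 1 then b i else .ann (a i) (b i) := by
      funext i
      by_cases hik : i = ⟨k, hk9⟩
      · subst hik; simp
      · rw [Function.update_of_ne hik]
        have hne : (i : ℕ) ≠ k := fun hc => hik (Fin.ext hc)
        by_cases h3 : (i : ℕ) < k
        · rw [if_pos h3, if_pos (by omega)]
        · rw [if_neg h3, if_neg (by omega)]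
    rw [hupd] at st
    refine (Relation.EqvGen.rel _ _ st).trans' ?_
    refine (eqT_annM _ (ih (k + 1) (by omega))).trans' ?_
    refine (Relation.EqvGen.rel _ _ (StepT.annAnn _ _ _)).trans' ?_
    refine eqT_annQ _ ?_
    refine (Relation.EqvGen.rel _ _ (StepQ.tTb _ _)).trans' ?_
    refine eqQ_tb (fun i => ?_)
    by_cases hik : i = ⟨k, hk9⟩
    · subst hik
      rw [Function.update_self, if_pos (Nat.lt_succ_self k), if_neg (lt_irrefl k)]
      exact .rel _ _ (.tReflR _)
    · rw [Function.update_of_ne hik]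
      have hne : (i : ℕ) ≠ k := fun hc => hik (Fin.ext hc)
      by_cases h3 : (i : ℕ) < k
      · rw [if_pos h3, if_pos (show (i : ℕ) < k + 1 by omega)]
        exact .rel _ _ (.tReflL _)
      · rw [if_neg h3, if_neg (show ¬ (i : ℕ) < k + 1 by omega)]
        exact .rel _ _ (.tReflL _)

theorem eqS_pow_swap (n : ℕ) : EqS (pow (n + 1)) (.comp (pow n) .sh) := by
  induction n with
  | zero => exact .refl _
  | succ n ih =>
    exact (eqS_comp (.refl _) ih).trans'
      (Relation.EqvGen.symm' (.rel _ _ (.compAssoc _ _ _)))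

theorem eqS_comp_pow_id (n : ℕ) : EqS (.comp (pow n) .id) (pow n) := by
  induction n with
  | zero => exact .rel _ _ .shId
  | succ n ih =>
    exact (Relation.EqvGen.rel _ _ (.compAssoc _ _ _)).trans' (eqS_comp (.refl _) ih)

/-- `σ` maps the de Bruijn variables pointwise (up to στ-equivalence) to `f`. -/
def Pt (σ : Sb) (f : ℕ → Tm) : Prop :=
  EqT (.sub .one σ) (f 0) ∧ ∀ n, EqT (.sub .one (.comp (pow n) σ)) (f (n + 1))

theorem Pt_var {σ f} (h : Pt σ f) : ∀ n, EqT (.sub (toTm (.var n)) σ) (f n)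
  | 0 => h.1
  | n + 1 => (Relation.EqvGen.rel _ _ (.subSub _ _ _)).trans' (h.2 n)

theorem Pt_ext {σ f g} (h : Pt σ f) (he : ∀ n, EqT (f n) (g n)) : Pt σ g :=
  ⟨h.1.trans' (he 0), fun n => (h.2 n).trans' (he (n + 1))⟩

theorem Pt_id : Pt .id (fun n => toTm (.var n)) :=
  ⟨.rel _ _ .subOneId, fun n => eqT_subS .one (eqS_comp_pow_id n)⟩

theorem Pt_sh : Pt .sh (fun n => toTm (.var (n + 1))) :=
  ⟨.refl _, fun n => eqT_subS .one (Relation.EqvGen.symm' (eqS_pow_swap n))⟩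

theorem Pt_cons {σ f} (M) (h : Pt σ f) :
    Pt (.cons M σ) (fun n => match n with | 0 => M | n + 1 => f n) := by
  refine ⟨.rel _ _ (.subOneCons _ _), fun n => ?_⟩
  match n with
  | 0 => exact (eqT_subS .one (.rel _ _ (.shCons _ _))).trans' h.1
  | n + 1 =>
    refine (eqT_subS .one ?_).trans' (h.2 n)
    exact ((eqS_comp (eqS_pow_swap n) (.refl _)).trans'
      (.rel _ _ (.compAssoc _ _ _))).trans' (eqS_comp (.refl _) (.rel _ _ (.shCons _ _)))

theorem Pt_comp {σ f} (h : Pt σ f) (τ) :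
    Pt (.comp σ τ) (fun n => .sub (f n) τ) := by
  refine ⟨(Relation.EqvGen.symm' (.rel _ _ (.subSub _ _ _))).trans' (eqT_subM τ h.1),
    fun n => ?_⟩
  refine (eqT_subS .one (Relation.EqvGen.symm' (.rel _ _ (.compAssoc _ _ _)))).trans' ?_
  exact (Relation.EqvGen.symm' (.rel _ _ (.subSub _ _ _))).trans' (eqT_subM τ (h.2 n))

theorem Pt_can (σ) : Pt σ (fun n => .sub (toTm (.var n)) σ) :=
  ⟨.refl _, fun n => Relation.EqvGen.symm' (.rel _ _ (.subSub _ _ _))⟩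

theorem Pt_lift {σ f} (h : Pt σ f) :
    Pt (.cons .one (.comp σ .sh))
      (fun n => match n with | 0 => .one | n + 1 => .sub (f n) .sh) := by
  have h2 := Pt_cons .one (Pt_comp h .sh)
  exact ⟨h2.1, fun n => h2.2 n⟩

theorem eqT_varsh (m : ℕ) : EqT (.sub (toTm (.var m)) .sh) (toTm (.var (m + 1))) :=
  Pt_var Pt_sh m

theorem eqT_varcons (n : ℕ) (M σ) :
    EqT (.sub (toTm (.var (n + 1))) (.cons M σ)) (.sub (toTm (.var n)) σ) :=
  Pt_var (Pt_cons M (Pt_can σ)) (n + 1)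

theorem eqT_varlift (n : ℕ) (σ) :
    EqT (.sub (toTm (.var (n + 1))) (.cons .one (.comp σ .sh)))
      (.sub (.sub (toTm (.var n)) σ) .sh) :=
  Pt_var (Pt_lift (Pt_can σ)) (n + 1)

/-- Substitution- and erasure-free terms (with variables in `toTm` form). -/
inductive K : Tm → Prop
  | var (n : ℕ) : K (toTm (.var n))
  | lam {M} : K M → K (.lam M)
  | ap {M N} : K M → K N → K (.ap M N)
  | lets {M N} : K M → K N → K (.lets M N)
  | bang (q) {M} : K M → K (.bang q M)
  | ann (q) {M} : K M → K (.ann q M)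
  | insp {ϑ} : (∀ i, K (ϑ i)) → K (.insp ϑ)

/-- Self-erased terms: as `K`, but with no top-level annotations. -/
inductive KE : Tm → Prop
  | var (n : ℕ) : KE (toTm (.var n))
  | lam {M} : KE M → KE (.lam M)
  | ap {M N} : KE M → KE N → KE (.ap M N)
  | lets {M N} : KE M → KE N → KE (.lets M N)
  | bang (q) {M} : K M → KE (.bang q M)
  | insp {ϑ} : (∀ i, KE (ϑ i)) → KE (.insp ϑ)

theorem KE_K {M} (h : KE M) : K M := by
  induction h with
  | var n => exact .var n
  | lam _ ih => exact .lam ih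
  | ap _ _ ih1 ih2 => exact .ap ih1 ih2
  | lets _ _ ih1 ih2 => exact .lets ih1 ih2
  | bang q hM => exact .bang q hM
  | insp _ ih => exact .insp ih

theorem K_toTm (N : NTm) : K (toTm N) := by
  induction N with
  | var n => exact .var n
  | lam M ih => exact .lam ih
  | ap M N ih1 ih2 => exact .ap ih1 ih2
  | lets M N ih1 ih2 => exact .lets ih1 ih2
  | bang q M ih => exact .bang _ ih
  | ann q M ih => exact .ann _ ih
  | insp ϑ ih => exact .insp ih

theorem KE_er {M} (h : KE M) : EqT (.er M) M := by
  induction h with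
  | var n =>
    cases n with
    | zero => exact .rel _ _ .erOne
    | succ n => exact .rel _ _ (.erOneSh n)
  | lam _ ih => exact (Relation.EqvGen.rel _ _ (.erLam _)).trans' (eqT_lam ih)
  | ap _ _ ih1 ih2 => exact (Relation.EqvGen.rel _ _ (.erAp _ _)).trans' (eqT_ap ih1 ih2)
  | lets _ _ ih1 ih2 => exact (Relation.EqvGen.rel _ _ (.erLets _ _)).trans' (eqT_lets ih1 ih2)
  | bang q hM => exact .rel _ _ (.erBang _ _)
  | insp _ ih => exact (Relation.EqvGen.rel _ _ (.erInsp _)).trans' (eqT_insp ih)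

theorem KE_ext {M} (h : KE M) : EqQ (.ext M) .r := by
  induction h with
  | var n =>
    cases n with
    | zero => exact .rel _ _ .extOne
    | succ n => exact .rel _ _ (.extOneSh n)
  | lam _ ih =>
    exact ((Relation.EqvGen.rel _ _ (.extLam _)).trans' (eqQ_lam ih)).trans'
      (.rel _ _ .lamRefl)
  | ap _ _ ih1 ih2 =>
    exact ((Relation.EqvGen.rel _ _ (.extAp _ _)).trans' (eqQ_ap ih1 ih2)).trans'
      (.rel _ _ .apRefl)
  | lets _ _ ih1 ih2 =>
    exact ((Relation.EqvGen.rel _ _ (.extLets _ _)).trans' (eqQ_lets ih1 ih2)).trans'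
      (.rel _ _ .letsRefl)
  | bang q hM => exact .rel _ _ (.extBang _ _)
  | insp _ ih =>
    exact ((Relation.EqvGen.rel _ _ (.extInsp _)).trans' (eqQ_tb ih)).trans'
      (.rel _ _ .tbRefl)

theorem KB {M} (h : K M) : ∃ M', EqT (.er M) M' ∧ KE M' := by
  induction h with
  | var n => exact ⟨toTm (.var n), KE_er (.var n), .var n⟩
  | lam _ ih =>
    obtain ⟨M', h1, h2⟩ := ih
    exact ⟨.lam M', (Relation.EqvGen.rel _ _ (.erLam _)).trans' (eqT_lam h1), .lam h2⟩
  | ap _ _ ih1 ih2 =>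
    obtain ⟨M1, a1, a2⟩ := ih1
    obtain ⟨M2, b1, b2⟩ := ih2
    exact ⟨.ap M1 M2, (Relation.EqvGen.rel _ _ (.erAp _ _)).trans' (eqT_ap a1 b1), .ap a2 b2⟩
  | lets _ _ ih1 ih2 =>
    obtain ⟨M1, a1, a2⟩ := ih1
    obtain ⟨M2, b1, b2⟩ := ih2
    exact ⟨.lets M1 M2, (Relation.EqvGen.rel _ _ (.erLets _ _)).trans' (eqT_lets a1 b1),
      .lets a2 b2⟩
  | bang q hM => exact ⟨_, .rel _ _ (.erBang _ _), .bang q hM⟩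
  | ann q _ ih =>
    obtain ⟨M', h1, h2⟩ := ih
    exact ⟨M', (Relation.EqvGen.rel _ _ (.erAnn _ _)).trans' h1, h2⟩
  | insp _ ih =>
    choose f h1 h2 using ih
    exact ⟨.insp f, (Relation.EqvGen.rel _ _ (.erInsp _)).trans' (eqT_insp h1), .insp h2⟩

theorem KCren {M} (h : K M) : ∀ {τ} {rn : ℕ → ℕ}, Pt τ (fun n => toTm (.var (rn n))) →
    ∃ M', EqT (.sub M τ) M' ∧ K M' := by
  induction h with
  | var n => exact fun hp => ⟨_, Pt_var hp n, .var _⟩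
  | lam _ ih =>
    intro τ rn hp
    have hp1 : Pt (.cons .one (.comp τ .sh))
        (fun n => toTm (.var (match n with | 0 => 0 | n + 1 => rn n + 1))) := by
      refine Pt_ext (Pt_lift hp) ?_
      intro n
      match n with
      | 0 => exact .refl _
      | n + 1 => exact eqT_varsh (rn n)
    obtain ⟨M', h1, h2⟩ := ih hp1
    exact ⟨.lam M', (Relation.EqvGen.rel _ _ (.subLam _ _)).trans' (eqT_lam h1), .lam h2⟩
  | ap _ _ ih1 ih2 =>
    intro τ rn hp
    obtain ⟨M1, a1, a2⟩ := ih1 hp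
    obtain ⟨M2, b1, b2⟩ := ih2 hp
    exact ⟨.ap M1 M2, (Relation.EqvGen.rel _ _ (.subAp _ _ _)).trans' (eqT_ap a1 b1), .ap a2 b2⟩
  | lets _ _ ih1 ih2 =>
    intro τ rn hp
    obtain ⟨M1, a1, a2⟩ := ih1 hp
    have hp1 : Pt (.cons .one (.comp τ .sh))
        (fun n => toTm (.var (match n with | 0 => 0 | n + 1 => rn n + 1))) := by
      refine Pt_ext (Pt_lift hp) ?_
      intro n
      match n with
      | 0 => exact .refl _
      | n + 1 => exact eqT_varsh (rn n)
    obtain ⟨M2, b1, b2⟩ := ih2 hp1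
    exact ⟨.lets M1 M2, (Relation.EqvGen.rel _ _ (.subLets _ _ _)).trans' (eqT_lets a1 b1),
      .lets a2 b2⟩
  | bang q _ ih =>
    intro τ rn hp
    obtain ⟨M', h1, h2⟩ := ih hp
    exact ⟨.bang q M', (Relation.EqvGen.rel _ _ (.subBang _ _ _)).trans'
      (eqT_bang (.refl q) h1), .bang q h2⟩
  | ann q _ ih =>
    intro τ rn hp
    obtain ⟨M', h1, h2⟩ := ih hp
    exact ⟨.ann q M', (Relation.EqvGen.rel _ _ (.subAnn _ _ _)).trans'
      (eqT_ann (.refl q) h1), .ann q h2⟩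
  | insp _ ih =>
    intro τ rn hp
    choose f h1 h2 using fun i => ih i hp
    exact ⟨.insp f, (Relation.EqvGen.rel _ _ (.subInsp _ _)).trans' (eqT_insp h1), .insp h2⟩

theorem KEren {M} (h : KE M) : ∀ {τ} {rn : ℕ → ℕ}, Pt τ (fun n => toTm (.var (rn n))) →
    ∃ M', EqT (.sub M τ) M' ∧ KE M' := by
  induction h with
  | var n => exact fun hp => ⟨_, Pt_var hp n, .var _⟩
  | lam _ ih =>
    intro τ rn hp
    have hp1 : Pt (.cons .one (.comp τ .sh))
        (fun n => toTm (.var (match n with | 0 => 0 | n + 1 => rn n + 1))) := by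
      refine Pt_ext (Pt_lift hp) ?_
      intro n
      match n with
      | 0 => exact .refl _
      | n + 1 => exact eqT_varsh (rn n)
    obtain ⟨M', h1, h2⟩ := ih hp1
    exact ⟨.lam M', (Relation.EqvGen.rel _ _ (.subLam _ _)).trans' (eqT_lam h1), .lam h2⟩
  | ap _ _ ih1 ih2 =>
    intro τ rn hp
    obtain ⟨M1, a1, a2⟩ := ih1 hp
    obtain ⟨M2, b1, b2⟩ := ih2 hp
    exact ⟨.ap M1 M2, (Relation.EqvGen.rel _ _ (.subAp _ _ _)).trans' (eqT_ap a1 b1), .ap a2 b2⟩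
  | lets _ _ ih1 ih2 =>
    intro τ rn hp
    obtain ⟨M1, a1, a2⟩ := ih1 hp
    have hp1 : Pt (.cons .one (.comp τ .sh))
        (fun n => toTm (.var (match n with | 0 => 0 | n + 1 => rn n + 1))) := by
      refine Pt_ext (Pt_lift hp) ?_
      intro n
      match n with
      | 0 => exact .refl _
      | n + 1 => exact eqT_varsh (rn n)
    obtain ⟨M2, b1, b2⟩ := ih2 hp1
    exact ⟨.lets M1 M2, (Relation.EqvGen.rel _ _ (.subLets _ _ _)).trans' (eqT_lets a1 b1),
      .lets a2 b2⟩
  | bang q hM =>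
    intro τ rn hp
    obtain ⟨M', h1, h2⟩ := KCren hM hp
    exact ⟨.bang q M', (Relation.EqvGen.rel _ _ (.subBang _ _ _)).trans'
      (eqT_bang (.refl q) h1), .bang q h2⟩
  | insp _ ih =>
    intro τ rn hp
    choose f h1 h2 using fun i => ih i hp
    exact ⟨.insp f, (Relation.EqvGen.rel _ _ (.subInsp _ _)).trans' (eqT_insp h1), .insp h2⟩

theorem KC {M} (h : K M) : ∀ {τ g}, Pt τ g → (∀ n, K (g n)) →
    ∃ M', EqT (.sub M τ) M' ∧ K M' := by
  induction h with
  | var n => exact fun hp hg => ⟨_, Pt_var hp n, hg n⟩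
  | lam _ ih =>
    intro τ g hp hg
    choose r h1 h2 using fun n => KCren (hg n) Pt_sh
    have hp1 : Pt (.cons .one (.comp τ .sh))
        (fun n => match n with | 0 => Tm.one | n + 1 => r n) := by
      refine Pt_ext (Pt_lift hp) ?_
      intro n
      match n with
      | 0 => exact .refl _
      | n + 1 => exact h1 n
    have hg1 : ∀ n, K ((fun n => match n with | 0 => Tm.one | n + 1 => r n) n) := by
      intro n
      match n with
      | 0 => exact K.var 0
      | n + 1 => exact h2 n
    obtain ⟨M', m1, m2⟩ := ih hp1 hg1
    exact ⟨.lam M', (Relation.EqvGen.rel _ _ (.subLam _ _)).trans' (eqT_lam m1), .lam m2⟩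
  | ap _ _ ih1 ih2 =>
    intro τ g hp hg
    obtain ⟨M1, a1, a2⟩ := ih1 hp hg
    obtain ⟨M2, b1, b2⟩ := ih2 hp hg
    exact ⟨.ap M1 M2, (Relation.EqvGen.rel _ _ (.subAp _ _ _)).trans' (eqT_ap a1 b1), .ap a2 b2⟩
  | lets _ _ ih1 ih2 =>
    intro τ g hp hg
    obtain ⟨M1, a1, a2⟩ := ih1 hp hg
    choose r h1 h2 using fun n => KCren (hg n) Pt_sh
    have hp1 : Pt (.cons .one (.comp τ .sh))
        (fun n => match n with | 0 => Tm.one | n + 1 => r n) := by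
      refine Pt_ext (Pt_lift hp) ?_
      intro n
      match n with
      | 0 => exact .refl _
      | n + 1 => exact h1 n
    have hg1 : ∀ n, K ((fun n => match n with | 0 => Tm.one | n + 1 => r n) n) := by
      intro n
      match n with
      | 0 => exact K.var 0
      | n + 1 => exact h2 n
    obtain ⟨M2, b1, b2⟩ := ih2 hp1 hg1
    exact ⟨.lets M1 M2, (Relation.EqvGen.rel _ _ (.subLets _ _ _)).trans' (eqT_lets a1 b1),
      .lets a2 b2⟩
  | bang q _ ih =>
    intro τ g hp hg
    obtain ⟨M', h1, h2⟩ := ih hp hg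
    exact ⟨.bang q M', (Relation.EqvGen.rel _ _ (.subBang _ _ _)).trans'
      (eqT_bang (.refl q) h1), .bang q h2⟩
  | ann q _ ih =>
    intro τ g hp hg
    obtain ⟨M', h1, h2⟩ := ih hp hg
    exact ⟨.ann q M', (Relation.EqvGen.rel _ _ (.subAnn _ _ _)).trans'
      (eqT_ann (.refl q) h1), .ann q h2⟩
  | insp _ ih =>
    intro τ g hp hg
    choose f h1 h2 using fun i => ih i hp hg
    exact ⟨.insp f, (Relation.EqvGen.rel _ _ (.subInsp _ _)).trans' (eqT_insp h1), .insp h2⟩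

theorem KID {M} (h : K M) : ∀ {ι}, Pt ι (fun n => toTm (.var n)) → EqT (.sub M ι) M := by
  induction h with
  | var n => exact fun hp => Pt_var hp n
  | lam _ ih =>
    intro ι hp
    have hp1 : Pt (.cons .one (.comp ι .sh)) (fun n => toTm (.var n)) := by
      refine Pt_ext (Pt_lift hp) ?_
      intro n
      match n with
      | 0 => exact .refl _
      | n + 1 => exact eqT_varsh n
    exact (Relation.EqvGen.rel _ _ (.subLam _ _)).trans' (eqT_lam (ih hp1))
  | ap _ _ ih1 ih2 =>
    intro ι hp
    exact (Relation.EqvGen.rel _ _ (.subAp _ _ _)).trans' (eqT_ap (ih1 hp) (ih2 hp))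
  | lets _ _ ih1 ih2 =>
    intro ι hp
    have hp1 : Pt (.cons .one (.comp ι .sh)) (fun n => toTm (.var n)) := by
      refine Pt_ext (Pt_lift hp) ?_
      intro n
      match n with
      | 0 => exact .refl _
      | n + 1 => exact eqT_varsh n
    exact (Relation.EqvGen.rel _ _ (.subLets _ _ _)).trans' (eqT_lets (ih1 hp) (ih2 hp1))
  | bang q _ ih =>
    intro ι hp
    exact (Relation.EqvGen.rel _ _ (.subBang _ _ _)).trans' (eqT_bang (.refl q) (ih hp))
  | ann q _ ih =>
    intro ι hp
    exact (Relation.EqvGen.rel _ _ (.subAnn _ _ _)).trans' (eqT_ann (.refl q) (ih hp))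
  | insp _ ih =>
    intro ι hp
    exact (Relation.EqvGen.rel _ _ (.subInsp _ _)).trans' (eqT_insp fun i => ih i hp)

/-- Erasure commutes with substitutions whose images are self-erased. -/
theorem COMM {M} (h : K M) : ∀ {τ g}, Pt τ g → (∀ n, KE (g n)) →
    EqT (.er (.sub M τ)) (.sub (.er M) τ) := by
  induction h with
  | var n =>
    intro τ g hp hg
    have l : EqT (.er (.sub (toTm (.var n)) τ)) (g n) :=
      (eqT_er (Pt_var hp n)).trans' (KE_er (hg n))
    have r : EqT (.sub (.er (toTm (.var n))) τ) (g n) :=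
      (eqT_subM τ (KE_er (.var n))).trans' (Pt_var hp n)
    exact l.trans' (Relation.EqvGen.symm' r)
  | lam _ ih =>
    intro τ g hp hg
    choose r h1 h2 using fun n => KEren (hg n) Pt_sh
    have hp1 : Pt (.cons .one (.comp τ .sh))
        (fun n => match n with | 0 => Tm.one | n + 1 => r n) := by
      refine Pt_ext (Pt_lift hp) ?_
      intro n
      match n with
      | 0 => exact .refl _
      | n + 1 => exact h1 n
    have hg1 : ∀ n, KE ((fun n => match n with | 0 => Tm.one | n + 1 => r n) n) := by
      intro n
      match n with
      | 0 => exact KE.var 0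
      | n + 1 => exact h2 n
    refine ((eqT_er (.rel _ _ (.subLam _ _))).trans' (.rel _ _ (.erLam _))).trans' ?_
    refine (eqT_lam (ih hp1 hg1)).trans' ?_
    refine (Relation.EqvGen.symm' (.rel _ _ (.subLam _ _))).trans' ?_
    exact Relation.EqvGen.symm' (eqT_subM τ (.rel _ _ (.erLam _)))
  | ap _ _ ih1 ih2 =>
    intro τ g hp hg
    refine ((eqT_er (.rel _ _ (.subAp _ _ _))).trans' (.rel _ _ (.erAp _ _))).trans' ?_
    refine (eqT_ap (ih1 hp hg) (ih2 hp hg)).trans' ?_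
    refine (Relation.EqvGen.symm' (.rel _ _ (.subAp _ _ _))).trans' ?_
    exact Relation.EqvGen.symm' (eqT_subM τ (.rel _ _ (.erAp _ _)))
  | lets _ _ ih1 ih2 =>
    intro τ g hp hg
    choose r h1 h2 using fun n => KEren (hg n) Pt_sh
    have hp1 : Pt (.cons .one (.comp τ .sh))
        (fun n => match n with | 0 => Tm.one | n + 1 => r n) := by
      refine Pt_ext (Pt_lift hp) ?_
      intro n
      match n with
      | 0 => exact .refl _
      | n + 1 => exact h1 n
    have hg1 : ∀ n, KE ((fun n => match n with | 0 => Tm.one | n + 1 => r n) n) := by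
      intro n
      match n with
      | 0 => exact KE.var 0
      | n + 1 => exact h2 n
    refine ((eqT_er (.rel _ _ (.subLets _ _ _))).trans' (.rel _ _ (.erLets _ _))).trans' ?_
    refine (eqT_lets (ih1 hp hg) (ih2 hp1 hg1)).trans' ?_
    refine (Relation.EqvGen.symm' (.rel _ _ (.subLets _ _ _))).trans' ?_
    exact Relation.EqvGen.symm' (eqT_subM τ (.rel _ _ (.erLets _ _)))
  | bang q hM =>
    intro τ g hp hg
    refine ((eqT_er (.rel _ _ (.subBang _ _ _))).trans' (.rel _ _ (.erBang _ _))).trans' ?_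
    refine (Relation.EqvGen.symm' (.rel _ _ (.subBang _ _ _))).trans' ?_
    exact Relation.EqvGen.symm' (eqT_subM τ (.rel _ _ (.erBang _ _)))
  | ann q _ ih =>
    intro τ g hp hg
    refine ((eqT_er (.rel _ _ (.subAnn _ _ _))).trans' (.rel _ _ (.erAnn _ _))).trans' ?_
    refine (ih hp hg).trans' ?_
    exact Relation.EqvGen.symm' (eqT_subM τ (.rel _ _ (.erAnn _ _)))
  | insp _ ih =>
    intro τ g hp hg
    refine ((eqT_er (.rel _ _ (.subInsp _ _))).trans' (.rel _ _ (.erInsp _))).trans' ?_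
    refine (eqT_insp fun i => ih i hp hg).trans' ?_
    refine (Relation.EqvGen.symm' (.rel _ _ (.subInsp _ _))).trans' ?_
    exact Relation.EqvGen.symm' (eqT_subM τ (.rel _ _ (.erInsp _)))

/-- Focusing: every `K`-term is στ-equivalent to its own focused form. -/
theorem KA {M} (h : K M) : EqT M (.ann (.ext M) (.er M)) := by
  induction h with
  | var n =>
    cases n with
    | zero =>
      refine Relation.EqvGen.symm' ?_
      exact (eqT_ann (.rel _ _ .extOne) (.rel _ _ .erOne)).trans' (.rel _ _ (.annRefl _))
    | succ n =>
      refine Relation.EqvGen.symm' ?_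
      exact (eqT_ann (.rel _ _ (.extOneSh n)) (.rel _ _ (.erOneSh n))).trans'
        (.rel _ _ (.annRefl _))
  | lam _ ih =>
    refine ((eqT_lam ih).trans' (.rel _ _ (.lamAnn _ _))).trans' ?_
    exact eqT_ann (Relation.EqvGen.symm' (.rel _ _ (.extLam _)))
      (Relation.EqvGen.symm' (.rel _ _ (.erLam _)))
  | ap _ _ ih1 ih2 =>
    refine ((eqT_ap ih1 ih2).trans' (.rel _ _ (.apAnnL _ _ _))).trans' ?_
    refine ((eqT_annM _ (.rel _ _ (.apAnnR _ _ _))).trans' (.rel _ _ (.annAnn _ _ _))).trans' ?_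
    refine eqT_ann ?_ (Relation.EqvGen.symm' (.rel _ _ (.erAp _ _)))
    refine ((Relation.EqvGen.rel _ _ (.tAp _ _ _ _)).trans'
      (eqQ_ap (.rel _ _ (.tReflR _)) (.rel _ _ (.tReflL _)))).trans' ?_
    exact Relation.EqvGen.symm' (.rel _ _ (.extAp _ _))
  | lets _ _ ih1 ih2 =>
    refine ((eqT_lets ih1 ih2).trans' (.rel _ _ (.letsAnnL _ _ _))).trans' ?_
    refine ((eqT_annM _ (.rel _ _ (.letsAnnR _ _ _))).trans'
      (.rel _ _ (.annAnn _ _ _))).trans' ?_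
    refine eqT_ann ?_ (Relation.EqvGen.symm' (.rel _ _ (.erLets _ _)))
    refine ((Relation.EqvGen.rel _ _ (.tLets _ _ _ _)).trans'
      (eqQ_lets (.rel _ _ (.tReflR _)) (.rel _ _ (.tReflL _)))).trans' ?_
    exact Relation.EqvGen.symm' (.rel _ _ (.extLets _ _))
  | bang q hM =>
    refine Relation.EqvGen.symm' ?_
    exact (eqT_ann (.rel _ _ (.extBang _ _)) (.rel _ _ (.erBang _ _))).trans'
      (.rel _ _ (.annRefl _))
  | ann q _ ih =>
    refine ((eqT_annM _ ih).trans' (.rel _ _ (.annAnn _ _ _))).trans' ?_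
    exact eqT_ann (Relation.EqvGen.symm' (.rel _ _ (.extAnn _ _)))
      (Relation.EqvGen.symm' (.rel _ _ (.erAnn _ _)))
  | insp _ ih =>
    refine ((eqT_insp ih).trans' (insp_ann _ _)).trans' ?_
    exact eqT_ann (Relation.EqvGen.symm' (.rel _ _ (.extInsp _)))
      (Relation.EqvGen.symm' (.rel _ _ (.erInsp _)))

/-- `σ` is pointwise στ-equivalent to `K`-terms. -/
def PtK (σ : Sb) : Prop := ∃ g, Pt σ g ∧ ∀ n, K (g n)

theorem PtK_lift {σ} (h : PtK σ) : PtK (.cons .one (.comp σ .sh)) := by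
  obtain ⟨g, hp, hg⟩ := h
  choose r h1 h2 using fun n => KCren (hg n) Pt_sh
  refine ⟨fun n => match n with | 0 => Tm.one | n + 1 => r n, ?_, ?_⟩
  · refine Pt_ext (Pt_lift hp) ?_
    intro n
    match n with
    | 0 => exact .refl _
    | n + 1 => exact h1 n
  · intro n
    match n with
    | 0 => exact K.var 0
    | n + 1 => exact h2 n

mutual

theorem VK_clo : ∀ C : Clo, ∃ M', EqT (cloToTm C) M' ∧ K M'
  | .lamC M e => by
    obtain ⟨ge, hpe, hge⟩ := PtK_lift (VK_env e)
    obtain ⟨T1, t1, t2⟩ := KC (K_toTm M) hpe hge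
    obtain ⟨T2, e1, e2⟩ := KB t2
    refine ⟨.lam T2, ?_, .lam (KE_K e2)⟩
    refine ((eqT_er (.rel _ _ (.subLam _ _))).trans' (.rel _ _ (.erLam _))).trans' ?_
    exact eqT_lam ((eqT_er t1).trans' e1)
  | .bangC q C => by
    obtain ⟨M', h1, h2⟩ := VK_clo C
    exact ⟨.bang q M', eqT_bang (.refl q) h1, .bang q h2⟩

theorem VK_val : ∀ V : Val, ∃ M', EqT (valToTm V) M' ∧ K M'
  | .mk q C => by
    obtain ⟨M', h1, h2⟩ := VK_clo C
    exact ⟨.ann q M', eqT_ann (.refl q) h1, .ann q h2⟩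

theorem VK_env : ∀ e : Env, PtK (envToSub e)
  | .nil => ⟨fun n => toTm (.var n), Pt_id, fun n => K.var n⟩
  | .cons V e => by
    obtain ⟨W', w1, w2⟩ := VK_val V
    obtain ⟨g, hp, hg⟩ := VK_env e
    refine ⟨fun n => match n with | 0 => W' | n + 1 => g n, ?_, ?_⟩
    · refine Pt_ext (Pt_cons (valToTm V) hp) ?_
      intro n
      match n with
      | 0 => exact w1
      | n + 1 => exact .refl _
    · intro n
      match n with
      | 0 => exact w2
      | n + 1 => exact hg n

end

/-- The family of substitution triples `(σ, τ, ρ)` relating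
`N[σ][τ]` and `N[ρ]` in the let-bang rule, closed under lifting. -/
inductive REL (s : Sb) (W : Tm) : Sb → Sb → Sb → Prop
  | base : REL s W (.cons .one (.comp s .sh)) (.cons W .id) (.cons W s)
  | lift {σ τ ρ} : REL s W σ τ ρ →
      REL s W (.cons .one (.comp σ .sh)) (.cons .one (.comp τ .sh)) (.cons .one (.comp ρ .sh))

theorem REL_PtK {s W σ τ ρ} (hs : PtK s) (hW : ∃ W', EqT W W' ∧ K W')
    (h : REL s W σ τ ρ) : PtK σ ∧ PtK τ ∧ PtK ρ := by
  induction h with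
  | base =>
    obtain ⟨g, hp, hg⟩ := hs
    obtain ⟨W', w1, w2⟩ := hW
    refine ⟨PtK_lift ⟨g, hp, hg⟩, ?_, ?_⟩
    · refine ⟨fun n => match n with | 0 => W' | n + 1 => toTm (.var n), ?_, ?_⟩
      · refine Pt_ext (Pt_cons W Pt_id) ?_
        intro n
        match n with
        | 0 => exact w1
        | n + 1 => exact .refl _
      · intro n
        match n with
        | 0 => exact w2
        | n + 1 => exact K.var n
    · refine ⟨fun n => match n with | 0 => W' | n + 1 => g n, ?_, ?_⟩
      · refine Pt_ext (Pt_cons W hp) ?_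
        intro n
        match n with
        | 0 => exact w1
        | n + 1 => exact .refl _
      · intro n
        match n with
        | 0 => exact w2
        | n + 1 => exact hg n
  | lift _ ih => exact ⟨PtK_lift ih.1, PtK_lift ih.2.1, PtK_lift ih.2.2⟩

/-- The variable case of the erasure lemma. -/
theorem REL_var {s W σ τ ρ} (hs : PtK s) (hW : ∃ W', EqT W W' ∧ K W')
    (h : REL s W σ τ ρ) : ∀ n,
    EqT (.er (.sub (.er (.sub (toTm (.var n)) σ)) τ)) (.er (.sub (toTm (.var n)) ρ)) := by
  induction h with
  | base =>
    intro n
    obtain ⟨g, hp, hg⟩ := hs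
    cases n with
    | zero =>
      have l : EqT (.er (.sub (.er (.sub (toTm (.var 0)) (.cons .one (.comp s .sh))))
          (.cons W .id))) (.er W) := by
        refine eqT_er ?_
        refine (eqT_subM _ ((eqT_er (.rel _ _ (.subOneCons _ _))).trans'
          (.rel _ _ .erOne))).trans' ?_
        exact .rel _ _ (.subOneCons _ _)
      have r : EqT (.er (.sub (toTm (.var 0)) (.cons W s))) (.er W) :=
        eqT_er (.rel _ _ (.subOneCons _ _))
      exact l.trans' (Relation.EqvGen.symm' r)
    | succ n =>
      obtain ⟨Ft, f1, f2⟩ := KB (hg n)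
      have step1 : EqT (.sub (toTm (.var (n + 1))) (.cons .one (.comp s .sh)))
          (.sub (g n) .sh) :=
        (eqT_varlift n s).trans' (eqT_subM .sh (Pt_var hp n))
      have step2 : EqT (.er (.sub (g n) .sh)) (.sub Ft .sh) :=
        (COMM (hg n) Pt_sh (fun m => KE.var (m + 1))).trans' (eqT_subM .sh f1)
      have step3 : EqT (.sub (.sub Ft .sh) (.cons W .id)) Ft := by
        refine (Relation.EqvGen.rel _ _ (.subSub _ _ _)).trans' ?_
        refine (eqT_subS Ft (.rel _ _ (.shCons _ _))).trans' ?_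
        exact KID (KE_K f2) Pt_id
      have lhs : EqT (.er (.sub (.er (.sub (toTm (.var (n + 1)))
          (.cons .one (.comp s .sh)))) (.cons W .id))) Ft := by
        refine (eqT_er ?_).trans' (KE_er f2)
        exact (eqT_subM _ ((eqT_er step1).trans' step2)).trans' step3
      have rhs : EqT (.er (.sub (toTm (.var (n + 1))) (.cons W s))) Ft :=
        (eqT_er ((eqT_varcons n W s).trans' (Pt_var hp n))).trans' f1
      exact lhs.trans' (Relation.EqvGen.symm' rhs)
  | @lift σ τ ρ hrel ih =>
    intro n
    cases n with
    | zero =>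
      have l : EqT (.er (.sub (.er (.sub (toTm (.var 0)) (.cons .one (.comp σ .sh))))
          (.cons .one (.comp τ .sh)))) Tm.one := by
        refine (eqT_er ?_).trans' (.rel _ _ .erOne)
        refine (eqT_subM _ ((eqT_er (.rel _ _ (.subOneCons _ _))).trans'
          (.rel _ _ .erOne))).trans' ?_
        exact .rel _ _ (.subOneCons _ _)
      have r : EqT (.er (.sub (toTm (.var 0)) (.cons .one (.comp ρ .sh)))) Tm.one :=
        (eqT_er (.rel _ _ (.subOneCons _ _))).trans' (.rel _ _ .erOne)
      exact l.trans' (Relation.EqvGen.symm' r)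
    | succ n =>
      obtain ⟨⟨gσ, hpσ, hgσ⟩, ⟨gτ, hpτ, hgτ⟩, ⟨gρ, hpρ, hgρ⟩⟩ := REL_PtK hs hW hrel
      obtain ⟨Aσt, a1, a2⟩ := KB (hgσ n)
      obtain ⟨U, u1, u2⟩ := KC (KE_K a2) hpτ hgτ
      obtain ⟨Aρt, c1, c2⟩ := KB (hgρ n)
      have step1 : EqT (.sub (toTm (.var (n + 1))) (.cons .one (.comp σ .sh)))
          (.sub (gσ n) .sh) :=
        (eqT_varlift n σ).trans' (eqT_subM .sh (Pt_var hpσ n))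
      have step2 : EqT (.er (.sub (gσ n) .sh)) (.sub Aσt .sh) :=
        (COMM (hgσ n) Pt_sh (fun m => KE.var (m + 1))).trans' (eqT_subM .sh a1)
      have step3 : EqT (.sub (.sub Aσt .sh) (.cons .one (.comp τ .sh))) (.sub U .sh) := by
        refine (Relation.EqvGen.rel _ _ (.subSub _ _ _)).trans' ?_
        refine (eqT_subS Aσt (.rel _ _ (.shCons _ _))).trans' ?_
        exact (Relation.EqvGen.symm' (.rel _ _ (.subSub _ _ _))).trans' (eqT_subM .sh u1)
      have hUer : EqT (.er U) Aρt := by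
        refine Relation.EqvGen.trans' (Relation.EqvGen.symm' (eqT_er u1)) ?_
        refine Relation.EqvGen.trans' (eqT_er (eqT_subM τ (Relation.EqvGen.symm'
          ((eqT_er (Pt_var hpσ n)).trans' a1)))) ?_
        refine (ih n).trans' ?_
        exact (eqT_er (Pt_var hpρ n)).trans' c1
      have step4 : EqT (.er (.sub U .sh)) (.sub Aρt .sh) :=
        (COMM u2 Pt_sh (fun m => KE.var (m + 1))).trans' (eqT_subM .sh hUer)
      have lhs : EqT (.er (.sub (.er (.sub (toTm (.var (n + 1)))
          (.cons .one (.comp σ .sh)))) (.cons .one (.comp τ .sh)))) (.sub Aρt .sh) :=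
        Relation.EqvGen.trans'
          (eqT_er ((eqT_subM _ ((eqT_er step1).trans' step2)).trans' step3)) step4
      have rhs : EqT (.er (.sub (toTm (.var (n + 1))) (.cons .one (.comp ρ .sh))))
          (.sub Aρt .sh) := by
        refine Relation.EqvGen.trans'
          (eqT_er ((eqT_varlift n ρ).trans' (eqT_subM .sh (Pt_var hpρ n)))) ?_
        exact (COMM (hgρ n) Pt_sh (fun m => KE.var (m + 1))).trans' (eqT_subM .sh c1)
      exact lhs.trans' (Relation.EqvGen.symm' rhs)

/-- The variable case of the composition lemma. -/
theorem REL_comp_var {s W σ τ ρ} (hs : PtK s) (h : REL s W σ τ ρ) : ∀ n,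
    EqT (.sub (toTm (.var n)) (.comp σ τ)) (.sub (toTm (.var n)) ρ) := by
  induction h with
  | base =>
    intro n
    cases n with
    | zero =>
      refine Relation.EqvGen.trans' (Pt_var (Pt_comp (Pt_can _) _) 0) ?_
      refine Relation.EqvGen.trans' (eqT_subM _ (.rel _ _ (.subOneCons _ _))) ?_
      refine Relation.EqvGen.trans' (.rel _ _ (.subOneCons _ _)) ?_
      exact Relation.EqvGen.symm' (.rel _ _ (.subOneCons _ _))
    | succ n =>
      obtain ⟨g, hp, hg⟩ := hs
      refine Relation.EqvGen.trans' (Pt_var (Pt_comp (Pt_can _) _) (n + 1)) ?_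
      refine Relation.EqvGen.trans' (eqT_subM _ (eqT_varlift n s)) ?_
      refine Relation.EqvGen.trans' (.rel _ _ (.subSub _ _ _)) ?_
      refine Relation.EqvGen.trans' (eqT_subS _ (.rel _ _ (.shCons _ _))) ?_
      refine Relation.EqvGen.trans' (eqT_subM .id (Pt_var hp n)) ?_
      refine Relation.EqvGen.trans' (KID (hg n) Pt_id) ?_
      exact Relation.EqvGen.symm' ((eqT_varcons n W s).trans' (Pt_var hp n))
  | @lift σ τ ρ hrel ih =>
    intro n
    cases n with
    | zero =>
      refine Relation.EqvGen.trans' (Pt_var (Pt_comp (Pt_can _) _) 0) ?_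
      refine Relation.EqvGen.trans' (eqT_subM _ (.rel _ _ (.subOneCons _ _))) ?_
      refine Relation.EqvGen.trans' (.rel _ _ (.subOneCons _ _)) ?_
      exact Relation.EqvGen.symm' (.rel _ _ (.subOneCons _ _))
    | succ n =>
      refine Relation.EqvGen.trans' (Pt_var (Pt_comp (Pt_can _) _) (n + 1)) ?_
      refine Relation.EqvGen.trans' (eqT_subM _ (eqT_varlift n σ)) ?_
      refine Relation.EqvGen.trans' (.rel _ _ (.subSub _ _ _)) ?_
      refine Relation.EqvGen.trans' (eqT_subS _ (.rel _ _ (.shCons _ _))) ?_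
      refine Relation.EqvGen.trans' (Relation.EqvGen.symm' (.rel _ _ (.subSub _ _ _))) ?_
      refine Relation.EqvGen.trans' (eqT_subM .sh
        ((Relation.EqvGen.rel _ _ (.subSub _ _ _)).trans' (ih n))) ?_
      exact Relation.EqvGen.symm' (eqT_varlift n ρ)

/-- Pointwise equivalent substitutions act equivalently on pure terms. -/
theorem eqT_sub_pure (P : NTm) : ∀ {σ ρ : Sb},
    (∀ n, EqT (.sub (toTm (.var n)) σ) (.sub (toTm (.var n)) ρ)) →
    EqT (.sub (toTm P) σ) (.sub (toTm P) ρ) := by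
  induction P with
  | var n => exact fun h => h n
  | lam M ih =>
    intro σ ρ h
    have h1 : ∀ n, EqT (.sub (toTm (.var n)) (.cons .one (.comp σ .sh)))
        (.sub (toTm (.var n)) (.cons .one (.comp ρ .sh))) := by
      intro n
      cases n with
      | zero =>
        refine Relation.EqvGen.trans' (.rel _ _ (.subOneCons _ _)) ?_
        exact Relation.EqvGen.symm' (.rel _ _ (.subOneCons _ _))
      | succ n =>
        refine Relation.EqvGen.trans' (eqT_varlift n σ) ?_
        refine Relation.EqvGen.trans' (eqT_subM .sh (h n)) ?_
        exact Relation.EqvGen.symm' (eqT_varlift n ρ)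
    refine Relation.EqvGen.trans' (.rel _ _ (.subLam _ _)) ?_
    refine Relation.EqvGen.trans' (eqT_lam (ih h1)) ?_
    exact Relation.EqvGen.symm' (.rel _ _ (.subLam _ _))
  | ap M N ih1 ih2 =>
    intro σ ρ h
    refine Relation.EqvGen.trans' (.rel _ _ (.subAp _ _ _)) ?_
    refine Relation.EqvGen.trans' (eqT_ap (ih1 h) (ih2 h)) ?_
    exact Relation.EqvGen.symm' (.rel _ _ (.subAp _ _ _))
  | lets M N ih1 ih2 =>
    intro σ ρ h
    have h1 : ∀ n, EqT (.sub (toTm (.var n)) (.cons .one (.comp σ .sh)))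
        (.sub (toTm (.var n)) (.cons .one (.comp ρ .sh))) := by
      intro n
      cases n with
      | zero =>
        refine Relation.EqvGen.trans' (.rel _ _ (.subOneCons _ _)) ?_
        exact Relation.EqvGen.symm' (.rel _ _ (.subOneCons _ _))
      | succ n =>
        refine Relation.EqvGen.trans' (eqT_varlift n σ) ?_
        refine Relation.EqvGen.trans' (eqT_subM .sh (h n)) ?_
        exact Relation.EqvGen.symm' (eqT_varlift n ρ)
    refine Relation.EqvGen.trans' (.rel _ _ (.subLets _ _ _)) ?_
    refine Relation.EqvGen.trans' (eqT_lets (ih1 h) (ih2 h1)) ?_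
    exact Relation.EqvGen.symm' (.rel _ _ (.subLets _ _ _))
  | bang q M ih =>
    intro σ ρ h
    refine Relation.EqvGen.trans' (.rel _ _ (.subBang _ _ _)) ?_
    refine Relation.EqvGen.trans' (eqT_bang (.refl _) (ih h)) ?_
    exact Relation.EqvGen.symm' (.rel _ _ (.subBang _ _ _))
  | ann q M ih =>
    intro σ ρ h
    refine Relation.EqvGen.trans' (.rel _ _ (.subAnn _ _ _)) ?_
    refine Relation.EqvGen.trans' (eqT_ann (.refl _) (ih h)) ?_
    exact Relation.EqvGen.symm' (.rel _ _ (.subAnn _ _ _))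
  | insp ϑ ih =>
    intro σ ρ h
    refine Relation.EqvGen.trans' (.rel _ _ (.subInsp _ _)) ?_
    refine Relation.EqvGen.trans' (eqT_insp fun i => ih i h) ?_
    exact Relation.EqvGen.symm' (.rel _ _ (.subInsp _ _))

/-- The erasure lemma: `⌊⌊N[σ]⌋[τ]⌋ ≈ ⌊N[ρ]⌋` for `(σ, τ, ρ)` in the family. -/
theorem REL_erase {s W} (hs : PtK s) (hW : ∃ W', EqT W W' ∧ K W') (P : NTm) :
    ∀ {σ τ ρ}, REL s W σ τ ρ →
    EqT (.er (.sub (.er (.sub (toTm P) σ)) τ)) (.er (.sub (toTm P) ρ)) := by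
  induction P with
  | var n => exact fun h => REL_var hs hW h n
  | lam M ih =>
    intro σ τ ρ h
    refine Relation.EqvGen.trans' (eqT_er (eqT_subM τ (eqT_er (.rel _ _ (.subLam _ _))))) ?_
    refine Relation.EqvGen.trans' (eqT_er (eqT_subM τ (.rel _ _ (.erLam _)))) ?_
    refine Relation.EqvGen.trans' (eqT_er (.rel _ _ (.subLam _ _))) ?_
    refine Relation.EqvGen.trans' (.rel _ _ (.erLam _)) ?_
    refine Relation.EqvGen.trans' (eqT_lam (ih (h.lift))) ?_
    refine Relation.EqvGen.trans' (Relation.EqvGen.symm' (.rel _ _ (.erLam _))) ?_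
    exact Relation.EqvGen.symm' (eqT_er (.rel _ _ (.subLam _ _)))
  | ap M N ih1 ih2 =>
    intro σ τ ρ h
    refine Relation.EqvGen.trans' (eqT_er (eqT_subM τ (eqT_er (.rel _ _ (.subAp _ _ _))))) ?_
    refine Relation.EqvGen.trans' (eqT_er (eqT_subM τ (.rel _ _ (.erAp _ _)))) ?_
    refine Relation.EqvGen.trans' (eqT_er (.rel _ _ (.subAp _ _ _))) ?_
    refine Relation.EqvGen.trans' (.rel _ _ (.erAp _ _)) ?_
    refine Relation.EqvGen.trans' (eqT_ap (ih1 h) (ih2 h)) ?_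
    refine Relation.EqvGen.trans' (Relation.EqvGen.symm' (.rel _ _ (.erAp _ _))) ?_
    exact Relation.EqvGen.symm' (eqT_er (.rel _ _ (.subAp _ _ _)))
  | lets M N ih1 ih2 =>
    intro σ τ ρ h
    refine Relation.EqvGen.trans' (eqT_er (eqT_subM τ (eqT_er (.rel _ _ (.subLets _ _ _))))) ?_
    refine Relation.EqvGen.trans' (eqT_er (eqT_subM τ (.rel _ _ (.erLets _ _)))) ?_
    refine Relation.EqvGen.trans' (eqT_er (.rel _ _ (.subLets _ _ _))) ?_
    refine Relation.EqvGen.trans' (.rel _ _ (.erLets _ _)) ?_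
    refine Relation.EqvGen.trans' (eqT_lets (ih1 h) (ih2 (h.lift))) ?_
    refine Relation.EqvGen.trans' (Relation.EqvGen.symm' (.rel _ _ (.erLets _ _))) ?_
    exact Relation.EqvGen.symm' (eqT_er (.rel _ _ (.subLets _ _ _)))
  | bang q M ih =>
    intro σ τ ρ h
    refine Relation.EqvGen.trans' (eqT_er (eqT_subM τ (eqT_er (.rel _ _ (.subBang _ _ _))))) ?_
    refine Relation.EqvGen.trans' (eqT_er (eqT_subM τ (.rel _ _ (.erBang _ _)))) ?_
    refine Relation.EqvGen.trans' (eqT_er (.rel _ _ (.subBang _ _ _))) ?_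
    refine Relation.EqvGen.trans' (.rel _ _ (.erBang _ _)) ?_
    refine Relation.EqvGen.trans' (eqT_bang (.refl _) (.rel _ _ (.subSub _ _ _))) ?_
    refine Relation.EqvGen.trans'
      (eqT_bang (.refl _) (eqT_sub_pure M (REL_comp_var hs h))) ?_
    refine Relation.EqvGen.trans' (Relation.EqvGen.symm' (.rel _ _ (.erBang _ _))) ?_
    exact Relation.EqvGen.symm' (eqT_er (.rel _ _ (.subBang _ _ _)))
  | ann q M ih =>
    intro σ τ ρ h
    refine Relation.EqvGen.trans' (eqT_er (eqT_subM τ (eqT_er (.rel _ _ (.subAnn _ _ _))))) ?_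
    refine Relation.EqvGen.trans' (eqT_er (eqT_subM τ (.rel _ _ (.erAnn _ _)))) ?_
    refine Relation.EqvGen.trans' (ih h) ?_
    refine Relation.EqvGen.trans' (Relation.EqvGen.symm' (.rel _ _ (.erAnn (toTr q) _))) ?_
    exact Relation.EqvGen.symm' (eqT_er (.rel _ _ (.subAnn _ _ _)))
  | insp ϑ ih =>
    intro σ τ ρ h
    refine Relation.EqvGen.trans' (eqT_er (eqT_subM τ (eqT_er (.rel _ _ (.subInsp _ _))))) ?_
    refine Relation.EqvGen.trans' (eqT_er (eqT_subM τ (.rel _ _ (.erInsp _)))) ?_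
    refine Relation.EqvGen.trans' (eqT_er (.rel _ _ (.subInsp _ _))) ?_
    refine Relation.EqvGen.trans' (.rel _ _ (.erInsp _)) ?_
    refine Relation.EqvGen.trans' (eqT_insp fun i => ih i h) ?_
    refine Relation.EqvGen.trans' (Relation.EqvGen.symm' (.rel _ _ (.erInsp _))) ?_
    exact Relation.EqvGen.symm' (eqT_er (.rel _ _ (.subInsp _ _)))

end LetBangAdm

/-- Admissible let-bang rule for machine values:
`let(q ▷ ! V, ⌊N̂[1·(e∘↑)]⌋) ↠ t(let(q,r); β!; ⌈⌊N̂[1·(e∘↑)]⌋[V]⌉) ▷ ⌊N̂[V·e]⌋`. -/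
theorem machine_letbang_admissible (nfq : Tr → Tr) (hq : IsNFQ nfq) :
    ∀ (q : Tr) (N : NTm) (e : Env) (V : Val),
      Relation.ReflTransGen (SRed nfq)
        (.lets (.ann q (.bang .r (valToTm V)))
          (.er (.sub (toTm N) (.cons .one (.comp (envToSub e) .sh)))))
        (.ann (.t (.lets q .r) (.t .pbb
            (.ext (.sub (.er (.sub (toTm N) (.cons .one (.comp (envToSub e) .sh))))
              (.cons (valToTm V) .id)))))
          (.er (.sub (toTm N) (.cons (valToTm V) (envToSub e))))) := by
  intro q N e V
  have hs : PtK (envToSub e) := VK_env e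
  have hW : ∃ W', EqT (valToTm V) W' ∧ K W' := VK_val V
  obtain ⟨hσ, hτ, hρ⟩ := REL_PtK hs hW (REL.base (s := envToSub e) (W := valToTm V))
  obtain ⟨gσ, hpσ, hgσ⟩ := hσ
  obtain ⟨gτ, hpτ, hgτ⟩ := hτ
  obtain ⟨B1, b1, b2⟩ := KC (K_toTm N) hpσ hgσ
  obtain ⟨B2, c1, c2⟩ := KB b2
  have hB : EqT (.er (.sub (toTm N) (.cons .one (.comp (envToSub e) .sh)))) B2 :=
    (eqT_er b1).trans' c1
  obtain ⟨Z1, z1, z2⟩ := KC (KE_K c2) hpτ hgτ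
  have hZ1 : EqT (.sub (.er (.sub (toTm N) (.cons .one (.comp (envToSub e) .sh))))
      (.cons (valToTm V) .id)) Z1 :=
    Relation.EqvGen.trans' (eqT_subM _ hB) z1
  have hFOC : EqT
      (.sub (.er (.sub (toTm N) (.cons .one (.comp (envToSub e) .sh))))
        (.cons (valToTm V) .id))
      (.ann (.ext (.sub (.er (.sub (toTm N) (.cons .one (.comp (envToSub e) .sh))))
          (.cons (valToTm V) .id)))
        (.er (.sub (.er (.sub (toTm N) (.cons .one (.comp (envToSub e) .sh))))
          (.cons (valToTm V) .id)))) := by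
    refine Relation.EqvGen.trans' hZ1 ?_
    refine Relation.EqvGen.trans' (KA z2) ?_
    exact eqT_ann (eqQ_ext (Relation.EqvGen.symm' hZ1)) (eqT_er (Relation.EqvGen.symm' hZ1))
  have hY : EqT
      (.er (.sub (.er (.sub (toTm N) (.cons .one (.comp (envToSub e) .sh))))
        (.cons (valToTm V) .id)))
      (.er (.sub (toTm N) (.cons (valToTm V) (envToSub e)))) :=
    REL_erase hs hW N REL.base
  have hExtB : EqQ (.ext (.er (.sub (toTm N) (.cons .one (.comp (envToSub e) .sh))))) .r :=
    (eqQ_ext hB).trans' (KE_ext c2)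
  have hXZ : EqT
      (.sub (.er (.er (.sub (toTm N) (.cons .one (.comp (envToSub e) .sh)))))
        (.cons (.ann .r (valToTm V)) .id))
      (.sub (.er (.sub (toTm N) (.cons .one (.comp (envToSub e) .sh))))
        (.cons (valToTm V) .id)) :=
    eqT_sub ((eqT_er hB).trans' ((KE_er c2).trans' (Relation.EqvGen.symm' hB)))
      (eqS_cons (.rel _ _ (.annRefl _)) (.refl _))
  have big : EqT
      (.ann (.lets q .r)
        (.ann (.t (.lets .r (.ext (.er (.sub (toTm N)
              (.cons .one (.comp (envToSub e) .sh)))))) .pbb)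
          (.sub (.er (.er (.sub (toTm N) (.cons .one (.comp (envToSub e) .sh)))))
            (.cons (.ann .r (valToTm V)) .id))))
      (.ann (.t (.lets q .r) (.t .pbb
          (.ext (.sub (.er (.sub (toTm N) (.cons .one (.comp (envToSub e) .sh))))
            (.cons (valToTm V) .id)))))
        (.er (.sub (toTm N) (.cons (valToTm V) (envToSub e))))) := by
    refine Relation.EqvGen.trans'
      (eqT_annM _ (eqT_annM _ (hXZ.trans' (hFOC.trans' (eqT_annM _ hY))))) ?_
    refine Relation.EqvGen.trans' (eqT_annM _ (.rel _ _ (.annAnn _ _ _))) ?_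
    refine Relation.EqvGen.trans' (.rel _ _ (.annAnn _ _ _)) ?_
    refine eqT_annQ _ ?_
    refine eqQ_t (.refl _) (eqQ_t ?_ (.refl _))
    refine Relation.EqvGen.trans' (eqQ_t (eqQ_lets (.refl _) hExtB) (.refl _)) ?_
    refine Relation.EqvGen.trans' (eqQ_t (.rel _ _ .letsRefl) (.refl _)) ?_
    exact .rel _ _ (.tReflL _)
  refine Relation.ReflTransGen.head (Or.inr (.rel _ _ (.letsAnnL _ _ _))) ?_
  refine Relation.ReflTransGen.head (Or.inl (.ann _ (.betaBang _ _ _))) ?_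
  exact Relation.ReflTransGen.single (Or.inr big)

end CAU
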